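/- Let g be in Monge form with k₁ ≠ k₂ as above. The origin is a second order ridge point relative to v₁ (v₁κ₁(0) = v₁²κ₁(0) = 0, v₁³κ₁(0) ≠ 0) if and only if a₃₀ = 0, 3a₂₁² + (a₄₀ − 3k₁³)(k₁−k₂) = 0, and 15a₂₁²a₁₂ + 10a₂₁a₃₁(k₁−k₂) + a₅₀(k₁−k₂)² ≠ 0. -/

import Mathlib

noncomputable section

/-- Partial derivative in the first variable. -/
def pdu (f : ℝ × ℝ → ℝ) (p : ℝ × ℝ) : ℝ := fderiv ℝ f p (1, 0)

/-- Partial derivative in the second variable. -/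
def pdv (f : ℝ × ℝ → ℝ) (p : ℝ × ℝ) : ℝ := fderiv ℝ f p (0, 1)

/-- Coefficient `E` of the first fundamental form of the Monge surface `(u,v,f(u,v))`. -/
def Ee (f : ℝ × ℝ → ℝ) (p : ℝ × ℝ) : ℝ := 1 + (pdu f p) ^ 2

/-- Coefficient `F` of the first fundamental form. -/
def Ff (f : ℝ × ℝ → ℝ) (p : ℝ × ℝ) : ℝ := pdu f p * pdv f p

/-- Coefficient `G` of the first fundamental form. -/
def Gg (f : ℝ × ℝ → ℝ) (p : ℝ × ℝ) : ℝ := 1 + (pdv f p) ^ 2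

/-- Coefficient `L` of the second fundamental form. -/
def Ll (f : ℝ × ℝ → ℝ) (p : ℝ × ℝ) : ℝ :=
  pdu (pdu f) p / Real.sqrt (1 + (pdu f p) ^ 2 + (pdv f p) ^ 2)

/-- Coefficient `M` of the second fundamental form. -/
def Mm (f : ℝ × ℝ → ℝ) (p : ℝ × ℝ) : ℝ :=
  pdv (pdu f) p / Real.sqrt (1 + (pdu f p) ^ 2 + (pdv f p) ^ 2)

/-- Coefficient `N` of the second fundamental form. -/
def Nn (f : ℝ × ℝ → ℝ) (p : ℝ × ℝ) : ℝ :=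
  pdv (pdv f) p / Real.sqrt (1 + (pdu f p) ^ 2 + (pdv f p) ^ 2)

/-- `κ p` is a principal curvature of the Monge surface `(u,v,f(u,v))` at `p`:
it is a root of the characteristic equation
`(EG-F²)κ² - (EN-2FM+GL)κ + (LN-M²) = 0`. -/
def IsPrincipalCurvature (f : ℝ × ℝ → ℝ) (κ : ℝ × ℝ → ℝ) (p : ℝ × ℝ) : Prop :=
  (Ee f p * Gg f p - Ff f p ^ 2) * κ p ^ 2
    - (Ee f p * Nn f p - 2 * Ff f p * Mm f p + Gg f p * Ll f p) * κ p
    + (Ll f p * Nn f p - Mm f p ^ 2) = 0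

/-- `w` is a unit principal vector field for the principal curvature function `κ`:
`II·w = κ I·w` and `w` has unit length with respect to the first fundamental form. -/
def IsPrincipalField (f : ℝ × ℝ → ℝ) (κ : ℝ × ℝ → ℝ) (w : ℝ × ℝ → ℝ × ℝ)
    (p : ℝ × ℝ) : Prop :=
  Ll f p * (w p).1 + Mm f p * (w p).2 = κ p * (Ee f p * (w p).1 + Ff f p * (w p).2) ∧
  Mm f p * (w p).1 + Nn f p * (w p).2 = κ p * (Ff f p * (w p).1 + Gg f p * (w p).2) ∧
  Ee f p * (w p).1 ^ 2 + 2 * Ff f p * (w p).1 * (w p).2 + Gg f p * (w p).2 ^ 2 = 1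

/-- Directional derivative of a function along a vector field. -/
def dirDeriv (w : ℝ × ℝ → ℝ × ℝ) (h : ℝ × ℝ → ℝ) (p : ℝ × ℝ) : ℝ :=
  fderiv ℝ h p (w p)

open Filter Topology

namespace Ridge

/-- eventually `C^n` near 0 for every finite n -/
def DT (g : ℝ × ℝ → ℝ) : Prop := ∀ n : ℕ, ∀ᶠ p in 𝓝 (0 : ℝ × ℝ), ContDiffAt ℝ n g p

lemma DT_of_contDiffAt {g : ℝ × ℝ → ℝ} (h : ContDiffAt ℝ (⊤ : ℕ∞) g 0) : DT g := by
  intro n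
  exact (h.of_le (by exact_mod_cast le_top)).eventually (by simp)

lemma DT_of_contDiff {g : ℝ × ℝ → ℝ} (h : ContDiff ℝ (⊤ : ℕ∞) g) : DT g :=
  DT_of_contDiffAt h.contDiffAt

lemma DT.mul {a b : ℝ × ℝ → ℝ} (ha : DT a) (hb : DT b) :
    DT (fun p => a p * b p) := fun n => by
  filter_upwards [ha n, hb n] with p h1 h2 using h1.mul h2

lemma DT.add {a b : ℝ × ℝ → ℝ} (ha : DT a) (hb : DT b) :
    DT (fun p => a p + b p) := fun n => by
  filter_upwards [ha n, hb n] with p h1 h2 using h1.add h2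

lemma DT.const (c : ℝ) : DT (fun _ => c) := fun n =>
  Eventually.of_forall (fun _ => contDiffAt_const)

lemma DT.pdu {g : ℝ × ℝ → ℝ} (hg : DT g) : DT (pdu g) := fun n => by
  filter_upwards [hg (n+1)] with p h1
  have h2 : ContDiffAt ℝ n (fderiv ℝ g) p := by
    apply h1.fderiv_right
    norm_cast
  exact h2.clm_apply contDiffAt_const

lemma DT.pdv {g : ℝ × ℝ → ℝ} (hg : DT g) : DT (pdv g) := fun n => by
  filter_upwards [hg (n+1)] with p h1
  have h2 : ContDiffAt ℝ n (fderiv ℝ g) p := by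
    apply h1.fderiv_right
    norm_cast
  exact h2.clm_apply contDiffAt_const

lemma DT.diff {g : ℝ × ℝ → ℝ} (hg : DT g) :
    ∀ᶠ p in 𝓝 (0 : ℝ × ℝ), DifferentiableAt ℝ g p := by
  filter_upwards [hg 1] with p h1 using h1.differentiableAt (by norm_num)

/-- pointwise product rule for `pdu` -/
lemma pdu_mul_pt {a b : ℝ × ℝ → ℝ} {p : ℝ × ℝ} (ha : DifferentiableAt ℝ a p)
    (hb : DifferentiableAt ℝ b p) :
    pdu (fun q => a q * b q) p = pdu a p * b p + a p * pdu b p := by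
  unfold pdu
  rw [fderiv_fun_mul ha hb]
  simp only [ContinuousLinearMap.add_apply, ContinuousLinearMap.coe_smul', Pi.smul_apply,
    smul_eq_mul]
  ring

lemma pdv_mul_pt {a b : ℝ × ℝ → ℝ} {p : ℝ × ℝ} (ha : DifferentiableAt ℝ a p)
    (hb : DifferentiableAt ℝ b p) :
    pdv (fun q => a q * b q) p = pdv a p * b p + a p * pdv b p := by
  unfold pdv
  rw [fderiv_fun_mul ha hb]
  simp only [ContinuousLinearMap.add_apply, ContinuousLinearMap.coe_smul', Pi.smul_apply,
    smul_eq_mul]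
  ring

lemma pdu_add_pt {a b : ℝ × ℝ → ℝ} {p : ℝ × ℝ} (ha : DifferentiableAt ℝ a p)
    (hb : DifferentiableAt ℝ b p) :
    pdu (fun q => a q + b q) p = pdu a p + pdu b p := by
  unfold pdu; rw [fderiv_fun_add ha hb]; simp

lemma pdv_add_pt {a b : ℝ × ℝ → ℝ} {p : ℝ × ℝ} (ha : DifferentiableAt ℝ a p)
    (hb : DifferentiableAt ℝ b p) :
    pdv (fun q => a q + b q) p = pdv a p + pdv b p := by
  unfold pdv; rw [fderiv_fun_add ha hb]; simp

lemma pdu_const (c : ℝ) : pdu (fun _ => c) = fun _ => 0 := by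
  funext p; unfold pdu; simp

lemma pdv_const (c : ℝ) : pdv (fun _ => c) = fun _ => 0 := by
  funext p; unfold pdv; simp

/-- eventual product rule -/
lemma pdu_mulE {a b : ℝ × ℝ → ℝ} (ha : DT a) (hb : DT b) :
    pdu (fun q => a q * b q) =ᶠ[𝓝 (0:ℝ×ℝ)] fun p => pdu a p * b p + a p * pdu b p := by
  filter_upwards [ha.diff, hb.diff] with p h1 h2 using pdu_mul_pt h1 h2

lemma pdv_mulE {a b : ℝ × ℝ → ℝ} (ha : DT a) (hb : DT b) :
    pdv (fun q => a q * b q) =ᶠ[𝓝 (0:ℝ×ℝ)] fun p => pdv a p * b p + a p * pdv b p := by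
  filter_upwards [ha.diff, hb.diff] with p h1 h2 using pdv_mul_pt h1 h2

lemma pdu_mul3E {a b c : ℝ × ℝ → ℝ} (ha : DT a) (hb : DT b) (hc : DT c) :
    pdu (fun q => a q * b q * c q) =ᶠ[𝓝 (0:ℝ×ℝ)]
      fun p => pdu a p * b p * c p + a p * pdu b p * c p + a p * b p * pdu c p := by
  filter_upwards [ha.diff, hb.diff, hc.diff] with p h1 h2 h3
  have := pdu_mul_pt (h1.fun_mul h2) h3
  rw [pdu_mul_pt h1 h2] at this
  rw [this]; ring

lemma pdv_mul3E {a b c : ℝ × ℝ → ℝ} (ha : DT a) (hb : DT b) (hc : DT c) :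
    pdv (fun q => a q * b q * c q) =ᶠ[𝓝 (0:ℝ×ℝ)]
      fun p => pdv a p * b p * c p + a p * pdv b p * c p + a p * b p * pdv c p := by
  filter_upwards [ha.diff, hb.diff, hc.diff] with p h1 h2 h3
  have := pdv_mul_pt (h1.fun_mul h2) h3
  rw [pdv_mul_pt h1 h2] at this
  rw [this]; ring

lemma pdu_congr {a b : ℝ × ℝ → ℝ} (h : a =ᶠ[𝓝 (0:ℝ×ℝ)] b) :
    pdu a =ᶠ[𝓝 (0:ℝ×ℝ)] pdu b := by
  have := h.eventually_nhds
  filter_upwards [this] with p hp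
  have hp' : a =ᶠ[𝓝 p] b := hp
  unfold pdu
  rw [hp'.fderiv_eq]

lemma pdv_congr {a b : ℝ × ℝ → ℝ} (h : a =ᶠ[𝓝 (0:ℝ×ℝ)] b) :
    pdv a =ᶠ[𝓝 (0:ℝ×ℝ)] pdv b := by
  have := h.eventually_nhds
  filter_upwards [this] with p hp
  have hp' : a =ᶠ[𝓝 p] b := hp
  unfold pdv
  rw [hp'.fderiv_eq]

/-- symmetry of second derivatives, at a point of `C^∞`-ness -/
lemma pdu_pdv_comm_at {g : ℝ × ℝ → ℝ} {p : ℝ × ℝ} (hg : ContDiffAt ℝ (⊤:ℕ∞) g p) :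
    pdu (pdv g) p = pdv (pdu g) p := by
  have hsymm : IsSymmSndFDerivAt ℝ g p := by
    apply hg.isSymmSndFDerivAt
    norm_cast
    simp [minSmoothness_of_isRCLikeNormedField]
    exact WithTop.coe_le_coe.mpr (le_top : (2:ℕ∞) ≤ ⊤)
  have hdf : DifferentiableAt ℝ (fderiv ℝ g) p := by
    have : ContDiffAt ℝ 1 (fderiv ℝ g) p := hg.fderiv_right (by norm_cast)
    exact this.differentiableAt (by norm_num)
  have e1 : ∀ v : ℝ × ℝ, fderiv ℝ (fun q => fderiv ℝ g q v) p
      = (fderiv ℝ (fderiv ℝ g) p).flip v := by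
    intro v
    have : (fun q => fderiv ℝ g q v)
        = (fun L : (ℝ×ℝ) →L[ℝ] ℝ => L v) ∘ (fderiv ℝ g) := rfl
    rw [this]
    have happ : (fun L : (ℝ×ℝ) →L[ℝ] ℝ => L v)
        = (ContinuousLinearMap.apply ℝ ℝ v : ((ℝ×ℝ) →L[ℝ] ℝ) →L[ℝ] ℝ) := rfl
    rw [happ]
    rw [fderiv_comp p (ContinuousLinearMap.apply ℝ ℝ v).differentiableAt hdf,
      ContinuousLinearMap.fderiv]
    apply ContinuousLinearMap.ext
    intro u
    simp [ContinuousLinearMap.flip_apply]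
  show fderiv ℝ (fun q => fderiv ℝ g q (0,1)) p (1,0)
      = fderiv ℝ (fun q => fderiv ℝ g q (1,0)) p (0,1)
  rw [e1, e1]
  simp only [ContinuousLinearMap.flip_apply]
  exact hsymm (1,0) (0,1)

lemma pdu_pdv_comm {g : ℝ × ℝ → ℝ} (hg : ContDiff ℝ (⊤:ℕ∞) g) :
    pdu (pdv g) = pdv (pdu g) := by
  funext p; exact pdu_pdv_comm_at hg.contDiffAt

/-- linearity of fderiv application on `ℝ × ℝ` -/
lemma fderiv_apply_decomp (L : (ℝ × ℝ) →L[ℝ] ℝ) (x : ℝ × ℝ) :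
    L x = x.1 * L (1,0) + x.2 * L (0,1) := by
  have : x = x.1 • ((1:ℝ),(0:ℝ)) + x.2 • ((0:ℝ),(1:ℝ)) := by
    ext <;> simp
  have h2 : L (x.1 • ((1:ℝ),(0:ℝ)) + x.2 • ((0:ℝ),(1:ℝ)))
      = x.1 * L (1,0) + x.2 * L (0,1) := by
    rw [map_add, map_smul, map_smul]; simp
  rw [← this] at h2
  exact h2

end Ridge

namespace Ridge

lemma pdu_mul3_pt {a b c : ℝ × ℝ → ℝ} {p : ℝ × ℝ} (ha : DifferentiableAt ℝ a p)
    (hb : DifferentiableAt ℝ b p) (hc : DifferentiableAt ℝ c p) :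
    pdu (fun q => a q * b q * c q) p
      = pdu a p * b p * c p + a p * pdu b p * c p + a p * b p * pdu c p := by
  rw [pdu_mul_pt (ha.fun_mul hb) hc, pdu_mul_pt ha hb]
  ring

lemma pdv_mul3_pt {a b c : ℝ × ℝ → ℝ} {p : ℝ × ℝ} (ha : DifferentiableAt ℝ a p)
    (hb : DifferentiableAt ℝ b p) (hc : DifferentiableAt ℝ c p) :
    pdv (fun q => a q * b q * c q) p
      = pdv a p * b p * c p + a p * pdv b p * c p + a p * b p * pdv c p := by
  rw [pdv_mul_pt (ha.fun_mul hb) hc, pdv_mul_pt ha hb]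
  ring

lemma pdu_const_pt (c : ℝ) (p : ℝ × ℝ) : pdu (fun _ => c) p = 0 := by
  unfold pdu; simp

lemma pdv_const_pt (c : ℝ) (p : ℝ × ℝ) : pdv (fun _ => c) p = 0 := by
  unfold pdv; simp

lemma contDiff_pdu {g : ℝ × ℝ → ℝ} (hg : ContDiff ℝ (⊤:ℕ∞) g) :
    ContDiff ℝ (⊤:ℕ∞) (pdu g) := by
  have h1 : ContDiff ℝ (⊤:ℕ∞) (fderiv ℝ g) := hg.fderiv_right (by norm_cast)
  exact h1.clm_apply contDiff_const

lemma contDiff_pdv {g : ℝ × ℝ → ℝ} (hg : ContDiff ℝ (⊤:ℕ∞) g) :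
    ContDiff ℝ (⊤:ℕ∞) (pdv g) := by
  have h1 : ContDiff ℝ (⊤:ℕ∞) (fderiv ℝ g) := hg.fderiv_right (by norm_cast)
  exact h1.clm_apply contDiff_const

end Ridge

open Filter Topology Ridge

set_option maxHeartbeats 4000000

/-- The origin is a second order ridge point relative to `v₁`
(`v₁κ₁(0) = v₁²κ₁(0) = 0`, `v₁³κ₁(0) ≠ 0`) iff `a₃₀ = 0`,
`3a₂₁² + (a₄₀ - 3k₁³)(k₁-k₂) = 0` and
`15a₂₁²a₁₂ + 10a₂₁a₃₁(k₁-k₂) + a₅₀(k₁-k₂)² ≠ 0`. -/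
theorem stmt11
    (f : ℝ × ℝ → ℝ) (hf : ContDiff ℝ (⊤ : ℕ∞) f)
    (k1 k2 a30 a21 a12 a03 a40 a31 a22 : ℝ) (hk : k1 ≠ k2)
    (h00 : f 0 = 0) (h10 : pdu f 0 = 0) (h01 : pdv f 0 = 0)
    (h20 : pdu (pdu f) 0 = k1) (h11 : pdv (pdu f) 0 = 0) (h02 : pdv (pdv f) 0 = k2)
    (h30 : pdu (pdu (pdu f)) 0 = a30) (h21 : pdv (pdu (pdu f)) 0 = a21)
    (h12 : pdv (pdv (pdu f)) 0 = a12) (h03 : pdv (pdv (pdv f)) 0 = a03)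
    (h40 : pdu (pdu (pdu (pdu f))) 0 = a40)
    (h31 : pdv (pdu (pdu (pdu f))) 0 = a31)
    (h22 : pdv (pdv (pdu (pdu f))) 0 = a22)
    (κ : ℝ × ℝ → ℝ) (hκs : ContDiffAt ℝ (⊤ : ℕ∞) κ 0) (hκ0 : κ 0 = k1)
    (hκeig : ∀ᶠ p in nhds (0 : ℝ × ℝ), IsPrincipalCurvature f κ p)
    (a50 : ℝ) (h50 : pdu (pdu (pdu (pdu (pdu f)))) 0 = a50)
    (w : ℝ × ℝ → ℝ × ℝ) (hws : ContDiffAt ℝ (⊤ : ℕ∞) w 0) (hw0 : w 0 = (1, 0))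
    (hw : ∀ᶠ p in nhds (0 : ℝ × ℝ), IsPrincipalField f κ w p) :
    (dirDeriv w κ 0 = 0 ∧ dirDeriv w (dirDeriv w κ) 0 = 0 ∧
        dirDeriv w (dirDeriv w (dirDeriv w κ)) 0 ≠ 0) ↔
      (a30 = 0 ∧ 3 * a21 ^ 2 + (a40 - 3 * k1 ^ 3) * (k1 - k2) = 0 ∧
        15 * a21 ^ 2 * a12 + 10 * a21 * a31 * (k1 - k2) + a50 * (k1 - k2) ^ 2 ≠ 0) := by
  have hd : k1 - k2 ≠ 0 := sub_ne_zero.mpr hk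
  set w1 : ℝ × ℝ → ℝ := fun p => (w p).1 with hw1d
  set w2 : ℝ × ℝ → ℝ := fun p => (w p).2 with hw2d
  set Wq : ℝ × ℝ → ℝ := fun p => Real.sqrt (1 + pdu f p ^ 2 + pdv f p ^ 2) with hWqd
  set A : ℝ × ℝ → ℝ := fun p => pdu f p * w1 p + pdv f p * w2 p with hAd
  set Y : ℝ × ℝ → ℝ := fun p => w1 p + pdu f p * A p with hYd
  set X : ℝ × ℝ → ℝ := fun p => w2 p + pdv f p * A p with hXd
  set D1f : ℝ × ℝ → ℝ := fun p => w1 p * pdu κ p + w2 p * pdv κ p with hD1fd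
  set D2f : ℝ × ℝ → ℝ := fun p => w1 p * pdu D1f p + w2 p * pdv D1f p with hD2fd
  have hCfu : ContDiff ℝ (⊤:ℕ∞) (pdu f) := contDiff_pdu hf
  have hCfv : ContDiff ℝ (⊤:ℕ∞) (pdv f) := contDiff_pdv hf
  have hCfuu : ContDiff ℝ (⊤:ℕ∞) (pdu (pdu f)) := contDiff_pdu hCfu
  have hCfuv : ContDiff ℝ (⊤:ℕ∞) (pdv (pdu f)) := contDiff_pdv hCfu
  have sfv : pdu (pdv f) = pdv (pdu f) := pdu_pdv_comm hf
  have sfuv : pdu (pdv (pdu f)) = pdv (pdu (pdu f)) := pdu_pdv_comm hCfu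
  have sfvv : pdu (pdv (pdv f)) = pdv (pdv (pdu f)) := by
    rw [pdu_pdv_comm hCfv, sfv]
  have sfuuv : pdu (pdv (pdu (pdu f))) = pdv (pdu (pdu (pdu f))) := pdu_pdv_comm hCfuu
  have sfuvv : pdu (pdv (pdv (pdu f))) = pdv (pdv (pdu (pdu f))) := by
    rw [pdu_pdv_comm hCfuv, sfuv]
  have hDTf : DT f := DT_of_contDiff hf
  have hDTfu : DT (pdu f) := hDTf.pdu
  have hDTfv : DT (pdv f) := hDTf.pdv
  have hDTfuu : DT (pdu (pdu f)) := hDTfu.pdu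
  have hDTfuv : DT (pdv (pdu f)) := hDTfu.pdv
  have hDTfvv : DT (pdv (pdv f)) := hDTfv.pdv
  have hDTfuuu : DT (pdu (pdu (pdu f))) := hDTfuu.pdu
  have hDTfuuv : DT (pdv (pdu (pdu f))) := hDTfuu.pdv
  have hDTfuvv : DT (pdv (pdv (pdu f))) := hDTfuv.pdv
  have hDTfvvv : DT (pdv (pdv (pdv f))) := hDTfvv.pdv
  have hDTf40 : DT (pdu (pdu (pdu (pdu f)))) := hDTfuuu.pdu
  have hDTf31 : DT (pdv (pdu (pdu (pdu f)))) := hDTfuuu.pdv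
  have hDTf22 : DT (pdv (pdv (pdu (pdu f)))) := hDTfuuv.pdv
  have hDTk : DT κ := DT_of_contDiffAt hκs
  have hDTku : DT (pdu κ) := hDTk.pdu
  have hDTkv : DT (pdv κ) := hDTk.pdv
  have hDTkuu : DT (pdu (pdu κ)) := hDTku.pdu
  have hDTkvu : DT (pdu (pdv κ)) := hDTkv.pdu
  have hw1s : ContDiffAt ℝ (⊤:ℕ∞) w1 0 := (contDiff_fst.contDiffAt).comp 0 hws
  have hw2s : ContDiffAt ℝ (⊤:ℕ∞) w2 0 := (contDiff_snd.contDiffAt).comp 0 hws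
  have hDTw1 : DT w1 := DT_of_contDiffAt hw1s
  have hDTw2 : DT w2 := DT_of_contDiffAt hw2s
  have hDTw1u : DT (pdu w1) := hDTw1.pdu
  have hDTw1v : DT (pdv w1) := hDTw1.pdv
  have hDTw2u : DT (pdu w2) := hDTw2.pdu
  have hDTw2v : DT (pdv w2) := hDTw2.pdv
  have hDTw1uu : DT (pdu (pdu w1)) := hDTw1u.pdu
  have hDTw2uu : DT (pdu (pdu w2)) := hDTw2u.pdu
  have hCW : ContDiff ℝ (⊤:ℕ∞) Wq := by
    rw [hWqd]
    have h1 : ContDiff ℝ (⊤:ℕ∞) (fun p : ℝ×ℝ => 1 + pdu f p ^ 2 + pdv f p ^ 2) :=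
      (contDiff_const.add (hCfu.pow 2)).add (hCfv.pow 2)
    rw [contDiff_iff_contDiffAt]
    intro p
    exact (Real.contDiffAt_sqrt (by positivity)).comp p h1.contDiffAt
  have hDTW : DT Wq := DT_of_contDiff hCW
  have hDTWu : DT (pdu Wq) := hDTW.pdu
  have hDTWuu : DT (pdu (pdu Wq)) := hDTWu.pdu
  have hDTA : DT A := by rw [hAd]; exact (hDTfu.mul hDTw1).add (hDTfv.mul hDTw2)
  have hDTAu : DT (pdu A) := hDTA.pdu
  have hDTAv : DT (pdv A) := hDTA.pdv
  have hDTAuu : DT (pdu (pdu A)) := hDTAu.pdu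
  have hDTY : DT Y := by rw [hYd]; exact hDTw1.add (hDTfu.mul hDTA)
  have hDTYu : DT (pdu Y) := hDTY.pdu
  have hDTYv : DT (pdv Y) := hDTY.pdv
  have hDTYuu : DT (pdu (pdu Y)) := hDTYu.pdu
  have hDTX : DT X := by rw [hXd]; exact hDTw2.add (hDTfv.mul hDTA)
  have hDTXu : DT (pdu X) := hDTX.pdu
  have hDTD1 : DT D1f := by rw [hD1fd]; exact (hDTw1.mul hDTku).add (hDTw2.mul hDTkv)
  have hDTD1u : DT (pdu D1f) := hDTD1.pdu
  have hDTD1v : DT (pdv D1f) := hDTD1.pdv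
  have vw10 : w1 0 = 1 := by rw [hw1d]; simp [hw0]
  have vw20 : w2 0 = 0 := by rw [hw2d]; simp [hw0]
  have vκsym : pdu (pdv κ) 0 = pdv (pdu κ) 0 := pdu_pdv_comm_at hκs
  have vW0 : Wq 0 = 1 := by
    rw [hWqd]
    show Real.sqrt (1 + pdu f 0 ^ 2 + pdv f 0 ^ 2) = 1
    rw [h10, h01]
    have h1 : (1:ℝ) + 0 ^ 2 + 0 ^ 2 = 1 := by norm_num
    rw [h1, Real.sqrt_one]
  have hWne : ∀ p : ℝ × ℝ, Real.sqrt (1 + pdu f p ^ 2 + pdv f p ^ 2) ≠ 0 :=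
    fun p => ne_of_gt (Real.sqrt_pos.mpr (by positivity))
  have hQ4 : (fun p => Wq p * Wq p) =ᶠ[nhds (0:ℝ×ℝ)]
      (fun p => 1 + pdu f p * pdu f p + pdv f p * pdv f p) := by
    apply Filter.Eventually.of_forall
    intro p
    show Wq p * Wq p = 1 + pdu f p * pdu f p + pdv f p * pdv f p
    rw [hWqd]
    show Real.sqrt (1 + pdu f p ^ 2 + pdv f p ^ 2) * Real.sqrt (1 + pdu f p ^ 2 + pdv f p ^ 2)
        = 1 + pdu f p * pdu f p + pdv f p * pdv f p
    rw [Real.mul_self_sqrt (by positivity)]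
    ring
  have hQ1 : (fun p => pdu (pdu f) p * w1 p + pdv (pdu f) p * w2 p) =ᶠ[nhds (0:ℝ×ℝ)]
      (fun p => κ p * Wq p * Y p) := by
    filter_upwards [hw] with p hp
    obtain ⟨e1, -, -⟩ := hp
    simp only [Ll, Mm, Ee, Ff] at e1
    show pdu (pdu f) p * w1 p + pdv (pdu f) p * w2 p = κ p * Wq p * Y p
    simp only [hYd, hAd, hWqd, hw1d, hw2d]
    field_simp [hWne p] at e1
    linear_combination e1
  have hQ2 : (fun p => pdv (pdu f) p * w1 p + pdv (pdv f) p * w2 p) =ᶠ[nhds (0:ℝ×ℝ)]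
      (fun p => κ p * Wq p * X p) := by
    filter_upwards [hw] with p hp
    obtain ⟨-, e2, -⟩ := hp
    simp only [Mm, Nn, Ff, Gg] at e2
    show pdv (pdu f) p * w1 p + pdv (pdv f) p * w2 p = κ p * Wq p * X p
    simp only [hXd, hAd, hWqd, hw1d, hw2d]
    field_simp [hWne p] at e2
    linear_combination e2
  have hQ3 : (fun p => w1 p * w1 p + A p * A p + w2 p * w2 p) =ᶠ[nhds (0:ℝ×ℝ)]
      (fun _ => (1:ℝ)) := by
    filter_upwards [hw] with p hp
    obtain ⟨-, -, e3⟩ := hp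
    simp only [Ee, Ff, Gg] at e3
    show w1 p * w1 p + A p * A p + w2 p * w2 p = 1
    simp only [hAd, hw1d, hw2d]
    linear_combination e3
  have eL4u : pdu (fun p => Wq p * Wq p) =ᶠ[nhds (0:ℝ×ℝ)] (fun p => pdu Wq p * Wq p + Wq p * pdu Wq p) := by
    filter_upwards [hDTW.diff] with p dd0
    rw [pdu_mul_pt dd0 dd0]
    try simp only [sfv, sfuv, sfvv, sfuuv, sfuvv]
    try ring
  have eR4u : pdu (fun p => 1 + pdu f p * pdu f p + pdv f p * pdv f p) =ᶠ[nhds (0:ℝ×ℝ)] (fun p => pdu (pdu f) p * pdu f p + pdu f p * pdu (pdu f) p + pdv (pdu f) p * pdv f p + pdv f p * pdv (pdu f) p) := by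
    filter_upwards [hDTfu.diff, hDTfv.diff] with p dd0 dd1
    rw [pdu_add_pt ((differentiableAt_const (1:ℝ)).fun_add (dd0.fun_mul dd0)) (dd1.fun_mul dd1), pdu_add_pt (differentiableAt_const (1:ℝ)) (dd0.fun_mul dd0), pdu_const_pt, pdu_mul_pt dd0 dd0, pdu_mul_pt dd1 dd1]
    try simp only [sfv, sfuv, sfvv, sfuuv, sfuvv]
    try ring
  have C4u := (eL4u).symm.trans ((pdu_congr hQ4).trans eR4u)
  have E4u : pdu Wq 0 * Wq 0 + Wq 0 * pdu Wq 0 = pdu (pdu f) 0 * pdu f 0 + pdu f 0 * pdu (pdu f) 0 + pdv (pdu f) 0 * pdv f 0 + pdv f 0 * pdv (pdu f) 0 := C4u.eq_of_nhds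
  have vWu0 : pdu Wq 0 = 0 := by
    simp only [h10, h01, h20, h11, h02, h30, h21, h12, h03, h40, h31, h22, h50, hκ0, vw10, vw20, vW0] at E4u
    linear_combination E4u / 2
  have ptL4v : pdv (fun p => Wq p * Wq p) 0 = 2 * (pdv Wq 0) := by
    have dd0 : DifferentiableAt ℝ (Wq) 0 := hDTW.diff.self_of_nhds
    rw [pdv_mul_pt dd0 dd0]
    try simp only [sfv, sfuv, sfvv, sfuuv, sfuvv]
    try simp only [h10, h01, h20, h11, h02, h30, h21, h12, h03, h40, h31, h22, h50, hκ0, vw10, vw20, vW0, vWu0]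
    try ring
  have ptR4v : pdv (fun p => 1 + pdu f p * pdu f p + pdv f p * pdv f p) 0 = 0 := by
    have dd0 : DifferentiableAt ℝ (pdu f) 0 := hDTfu.diff.self_of_nhds
    have dd1 : DifferentiableAt ℝ (pdv f) 0 := hDTfv.diff.self_of_nhds
    rw [pdv_add_pt ((differentiableAt_const (1:ℝ)).fun_add (dd0.fun_mul dd0)) (dd1.fun_mul dd1), pdv_add_pt (differentiableAt_const (1:ℝ)) (dd0.fun_mul dd0), pdv_const_pt, pdv_mul_pt dd0 dd0, pdv_mul_pt dd1 dd1]
    try simp only [sfv, sfuv, sfvv, sfuuv, sfuvv]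
    try simp only [h10, h01, h20, h11, h02, h30, h21, h12, h03, h40, h31, h22, h50, hκ0, vw10, vw20, vW0, vWu0]
    try ring
  have E4v : pdv (fun p => Wq p * Wq p) 0 = pdv (fun p => 1 + pdu f p * pdu f p + pdv f p * pdv f p) 0 := (pdv_congr hQ4).eq_of_nhds
  rw [ptL4v, ptR4v] at E4v
  have vWv0 : pdv Wq 0 = 0 := by
    linear_combination E4v / 2
  have eL4uu : pdu (fun p => pdu Wq p * Wq p + Wq p * pdu Wq p) =ᶠ[nhds (0:ℝ×ℝ)] (fun p => pdu (pdu Wq) p * Wq p + pdu Wq p * pdu Wq p + pdu Wq p * pdu Wq p + Wq p * pdu (pdu Wq) p) := by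
    filter_upwards [hDTWu.diff, hDTW.diff] with p dd0 dd1
    rw [pdu_add_pt (dd0.fun_mul dd1) (dd1.fun_mul dd0), pdu_mul_pt dd0 dd1, pdu_mul_pt dd1 dd0]
    try simp only [sfv, sfuv, sfvv, sfuuv, sfuvv]
    try ring
  have eR4uu : pdu (fun p => pdu (pdu f) p * pdu f p + pdu f p * pdu (pdu f) p + pdv (pdu f) p * pdv f p + pdv f p * pdv (pdu f) p) =ᶠ[nhds (0:ℝ×ℝ)] (fun p => pdu (pdu (pdu f)) p * pdu f p + pdu (pdu f) p * pdu (pdu f) p + pdu (pdu f) p * pdu (pdu f) p + pdu f p * pdu (pdu (pdu f)) p + pdv (pdu (pdu f)) p * pdv f p + pdv (pdu f) p * pdv (pdu f) p + pdv (pdu f) p * pdv (pdu f) p + pdv f p * pdv (pdu (pdu f)) p) := by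
    filter_upwards [hDTfuu.diff, hDTfu.diff, hDTfuv.diff, hDTfv.diff] with p dd0 dd1 dd2 dd3
    rw [pdu_add_pt (((dd0.fun_mul dd1).fun_add (dd1.fun_mul dd0)).fun_add (dd2.fun_mul dd3)) (dd3.fun_mul dd2), pdu_add_pt ((dd0.fun_mul dd1).fun_add (dd1.fun_mul dd0)) (dd2.fun_mul dd3), pdu_add_pt (dd0.fun_mul dd1) (dd1.fun_mul dd0), pdu_mul_pt dd0 dd1, pdu_mul_pt dd1 dd0, pdu_mul_pt dd2 dd3, pdu_mul_pt dd3 dd2]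
    try simp only [sfv, sfuv, sfvv, sfuuv, sfuvv]
    try ring
  have C4uu := (eL4uu).symm.trans ((pdu_congr C4u).trans eR4uu)
  have E4uu : pdu (pdu Wq) 0 * Wq 0 + pdu Wq 0 * pdu Wq 0 + pdu Wq 0 * pdu Wq 0 + Wq 0 * pdu (pdu Wq) 0 = pdu (pdu (pdu f)) 0 * pdu f 0 + pdu (pdu f) 0 * pdu (pdu f) 0 + pdu (pdu f) 0 * pdu (pdu f) 0 + pdu f 0 * pdu (pdu (pdu f)) 0 + pdv (pdu (pdu f)) 0 * pdv f 0 + pdv (pdu f) 0 * pdv (pdu f) 0 + pdv (pdu f) 0 * pdv (pdu f) 0 + pdv f 0 * pdv (pdu (pdu f)) 0 := C4uu.eq_of_nhds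
  have vWuu0 : pdu (pdu Wq) 0 = k1 * k1 := by
    simp only [h10, h01, h20, h11, h02, h30, h21, h12, h03, h40, h31, h22, h50, hκ0, vw10, vw20, vW0, vWu0, vWv0] at E4uu
    linear_combination E4uu / 2
  have ptL4uv : pdv (fun p => pdu Wq p * Wq p + Wq p * pdu Wq p) 0 = 2 * (pdv (pdu Wq) 0) := by
    have dd0 : DifferentiableAt ℝ (pdu Wq) 0 := hDTWu.diff.self_of_nhds
    have dd1 : DifferentiableAt ℝ (Wq) 0 := hDTW.diff.self_of_nhds
    rw [pdv_add_pt (dd0.fun_mul dd1) (dd1.fun_mul dd0), pdv_mul_pt dd0 dd1, pdv_mul_pt dd1 dd0]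
    try simp only [sfv, sfuv, sfvv, sfuuv, sfuvv]
    try simp only [h10, h01, h20, h11, h02, h30, h21, h12, h03, h40, h31, h22, h50, hκ0, vw10, vw20, vW0, vWu0, vWv0, vWuu0]
    try ring
  have ptR4uv : pdv (fun p => pdu (pdu f) p * pdu f p + pdu f p * pdu (pdu f) p + pdv (pdu f) p * pdv f p + pdv f p * pdv (pdu f) p) 0 = 0 := by
    have dd0 : DifferentiableAt ℝ (pdu (pdu f)) 0 := hDTfuu.diff.self_of_nhds
    have dd1 : DifferentiableAt ℝ (pdu f) 0 := hDTfu.diff.self_of_nhds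
    have dd2 : DifferentiableAt ℝ (pdv (pdu f)) 0 := hDTfuv.diff.self_of_nhds
    have dd3 : DifferentiableAt ℝ (pdv f) 0 := hDTfv.diff.self_of_nhds
    rw [pdv_add_pt (((dd0.fun_mul dd1).fun_add (dd1.fun_mul dd0)).fun_add (dd2.fun_mul dd3)) (dd3.fun_mul dd2), pdv_add_pt ((dd0.fun_mul dd1).fun_add (dd1.fun_mul dd0)) (dd2.fun_mul dd3), pdv_add_pt (dd0.fun_mul dd1) (dd1.fun_mul dd0), pdv_mul_pt dd0 dd1, pdv_mul_pt dd1 dd0, pdv_mul_pt dd2 dd3, pdv_mul_pt dd3 dd2]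
    try simp only [sfv, sfuv, sfvv, sfuuv, sfuvv]
    try simp only [h10, h01, h20, h11, h02, h30, h21, h12, h03, h40, h31, h22, h50, hκ0, vw10, vw20, vW0, vWu0, vWv0, vWuu0]
    try ring
  have E4uv : pdv (fun p => pdu Wq p * Wq p + Wq p * pdu Wq p) 0 = pdv (fun p => pdu (pdu f) p * pdu f p + pdu f p * pdu (pdu f) p + pdv (pdu f) p * pdv f p + pdv f p * pdv (pdu f) p) 0 := (pdv_congr C4u).eq_of_nhds
  rw [ptL4uv, ptR4uv] at E4uv
  have vWuv0 : pdv (pdu Wq) 0 = 0 := by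
    linear_combination E4uv / 2
  have ptL4u3 : pdu (fun p => pdu (pdu Wq) p * Wq p + pdu Wq p * pdu Wq p + pdu Wq p * pdu Wq p + Wq p * pdu (pdu Wq) p) 0 = 2 * (pdu (pdu (pdu Wq)) 0) := by
    have dd0 : DifferentiableAt ℝ (pdu (pdu Wq)) 0 := hDTWuu.diff.self_of_nhds
    have dd1 : DifferentiableAt ℝ (Wq) 0 := hDTW.diff.self_of_nhds
    have dd2 : DifferentiableAt ℝ (pdu Wq) 0 := hDTWu.diff.self_of_nhds
    rw [pdu_add_pt (((dd0.fun_mul dd1).fun_add (dd2.fun_mul dd2)).fun_add (dd2.fun_mul dd2)) (dd1.fun_mul dd0), pdu_add_pt ((dd0.fun_mul dd1).fun_add (dd2.fun_mul dd2)) (dd2.fun_mul dd2), pdu_add_pt (dd0.fun_mul dd1) (dd2.fun_mul dd2), pdu_mul_pt dd0 dd1, pdu_mul_pt dd2 dd2, pdu_mul_pt dd1 dd0]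
    try simp only [sfv, sfuv, sfvv, sfuuv, sfuvv]
    try simp only [h10, h01, h20, h11, h02, h30, h21, h12, h03, h40, h31, h22, h50, hκ0, vw10, vw20, vW0, vWu0, vWv0, vWuu0, vWuv0]
    try ring
  have ptR4u3 : pdu (fun p => pdu (pdu (pdu f)) p * pdu f p + pdu (pdu f) p * pdu (pdu f) p + pdu (pdu f) p * pdu (pdu f) p + pdu f p * pdu (pdu (pdu f)) p + pdv (pdu (pdu f)) p * pdv f p + pdv (pdu f) p * pdv (pdu f) p + pdv (pdu f) p * pdv (pdu f) p + pdv f p * pdv (pdu (pdu f)) p) 0 = 6 * a30 * k1 := by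
    have dd0 : DifferentiableAt ℝ (pdu (pdu (pdu f))) 0 := hDTfuuu.diff.self_of_nhds
    have dd1 : DifferentiableAt ℝ (pdu f) 0 := hDTfu.diff.self_of_nhds
    have dd2 : DifferentiableAt ℝ (pdu (pdu f)) 0 := hDTfuu.diff.self_of_nhds
    have dd3 : DifferentiableAt ℝ (pdv (pdu (pdu f))) 0 := hDTfuuv.diff.self_of_nhds
    have dd4 : DifferentiableAt ℝ (pdv f) 0 := hDTfv.diff.self_of_nhds
    have dd5 : DifferentiableAt ℝ (pdv (pdu f)) 0 := hDTfuv.diff.self_of_nhds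
    rw [pdu_add_pt (((((((dd0.fun_mul dd1).fun_add (dd2.fun_mul dd2)).fun_add (dd2.fun_mul dd2)).fun_add (dd1.fun_mul dd0)).fun_add (dd3.fun_mul dd4)).fun_add (dd5.fun_mul dd5)).fun_add (dd5.fun_mul dd5)) (dd4.fun_mul dd3), pdu_add_pt ((((((dd0.fun_mul dd1).fun_add (dd2.fun_mul dd2)).fun_add (dd2.fun_mul dd2)).fun_add (dd1.fun_mul dd0)).fun_add (dd3.fun_mul dd4)).fun_add (dd5.fun_mul dd5)) (dd5.fun_mul dd5), pdu_add_pt (((((dd0.fun_mul dd1).fun_add (dd2.fun_mul dd2)).fun_add (dd2.fun_mul dd2)).fun_add (dd1.fun_mul dd0)).fun_add (dd3.fun_mul dd4)) (dd5.fun_mul dd5), pdu_add_pt ((((dd0.fun_mul dd1).fun_add (dd2.fun_mul dd2)).fun_add (dd2.fun_mul dd2)).fun_add (dd1.fun_mul dd0)) (dd3.fun_mul dd4), pdu_add_pt (((dd0.fun_mul dd1).fun_add (dd2.fun_mul dd2)).fun_add (dd2.fun_mul dd2)) (dd1.fun_mul dd0), pdu_add_pt ((dd0.fun_mul dd1).fun_add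 (dd2.fun_mul dd2)) (dd2.fun_mul dd2), pdu_add_pt (dd0.fun_mul dd1) (dd2.fun_mul dd2), pdu_mul_pt dd0 dd1, pdu_mul_pt dd2 dd2, pdu_mul_pt dd1 dd0, pdu_mul_pt dd3 dd4, pdu_mul_pt dd5 dd5, pdu_mul_pt dd4 dd3]
    try simp only [sfv, sfuv, sfvv, sfuuv, sfuvv]
    try simp only [h10, h01, h20, h11, h02, h30, h21, h12, h03, h40, h31, h22, h50, hκ0, vw10, vw20, vW0, vWu0, vWv0, vWuu0, vWuv0]
    try ring
  have E4u3 : pdu (fun p => pdu (pdu Wq) p * Wq p + pdu Wq p * pdu Wq p + pdu Wq p * pdu Wq p + Wq p * pdu (pdu Wq) p) 0 = pdu (fun p => pdu (pdu (pdu f)) p * pdu f p + pdu (pdu f) p * pdu (pdu f) p + pdu (pdu f) p * pdu (pdu f) p + pdu f p * pdu (pdu (pdu f)) p + pdv (pdu (pdu f)) p * pdv f p + pdv (pdu f) p * pdv (pdu f) p + pdv (pdu f) p * pdv (pdu f) p + pdv f p * pdv (pdu (pdu f)) p) 0 := (pdu_congr C4uu).eq_of_nhds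
  rw [ptL4u3, ptR4u3] at E4u3
  have vWuuu0 : pdu (pdu (pdu Wq)) 0 = 3 * a30 * k1 := by
    linear_combination E4u3 / 2
  have vA0 : A 0 = 0 := by
    rw [hAd]
    show pdu f 0 * w1 0 + pdv f 0 * w2 0 = 0
    try simp only [h10, h01, h20, h11, h02, h30, h21, h12, h03, h40, h31, h22, h50, hκ0, vw10, vw20, vW0, vWu0, vWv0, vWuu0, vWuv0, vWuuu0]
    try ring
  have eAu : pdu A =ᶠ[nhds (0:ℝ×ℝ)] (fun p => pdu (pdu f) p * w1 p + pdu f p * pdu w1 p + pdv (pdu f) p * w2 p + pdv f p * pdu w2 p) := by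
    rw [hAd]
    filter_upwards [hDTfu.diff, hDTw1.diff, hDTfv.diff, hDTw2.diff] with p dd0 dd1 dd2 dd3
    rw [pdu_add_pt (dd0.fun_mul dd1) (dd2.fun_mul dd3), pdu_mul_pt dd0 dd1, pdu_mul_pt dd2 dd3]
    try simp only [sfv, sfuv, sfvv, sfuuv, sfuvv]
    try ring
  have EAu : pdu A 0 = pdu (pdu f) 0 * w1 0 + pdu f 0 * pdu w1 0 + pdv (pdu f) 0 * w2 0 + pdv f 0 * pdu w2 0 := eAu.eq_of_nhds
  have vAu0 : pdu A 0 = k1 := by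
    simp only [h10, h01, h20, h11, h02, h30, h21, h12, h03, h40, h31, h22, h50, hκ0, vw10, vw20, vW0, vWu0, vWv0, vWuu0, vWuv0, vWuuu0, vA0] at EAu
    linear_combination EAu
  have vAv0 : pdv A 0 = 0 := by
    rw [hAd]
    have dd0 : DifferentiableAt ℝ (pdu f) 0 := hDTfu.diff.self_of_nhds
    have dd1 : DifferentiableAt ℝ (w1) 0 := hDTw1.diff.self_of_nhds
    have dd2 : DifferentiableAt ℝ (pdv f) 0 := hDTfv.diff.self_of_nhds
    have dd3 : DifferentiableAt ℝ (w2) 0 := hDTw2.diff.self_of_nhds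
    rw [pdv_add_pt (dd0.fun_mul dd1) (dd2.fun_mul dd3), pdv_mul_pt dd0 dd1, pdv_mul_pt dd2 dd3]
    try simp only [sfv, sfuv, sfvv, sfuuv, sfuvv]
    try simp only [h10, h01, h20, h11, h02, h30, h21, h12, h03, h40, h31, h22, h50, hκ0, vw10, vw20, vW0, vWu0, vWv0, vWuu0, vWuv0, vWuuu0, vA0, vAu0]
    try ring
  have eL3u : pdu (fun p => w1 p * w1 p + A p * A p + w2 p * w2 p) =ᶠ[nhds (0:ℝ×ℝ)] (fun p => pdu w1 p * w1 p + w1 p * pdu w1 p + pdu A p * A p + A p * pdu A p + pdu w2 p * w2 p + w2 p * pdu w2 p) := by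
    filter_upwards [hDTw1.diff, hDTA.diff, hDTw2.diff] with p dd0 dd1 dd2
    rw [pdu_add_pt ((dd0.fun_mul dd0).fun_add (dd1.fun_mul dd1)) (dd2.fun_mul dd2), pdu_add_pt (dd0.fun_mul dd0) (dd1.fun_mul dd1), pdu_mul_pt dd0 dd0, pdu_mul_pt dd1 dd1, pdu_mul_pt dd2 dd2]
    try simp only [sfv, sfuv, sfvv, sfuuv, sfuvv]
    try ring
  have C3u : (fun p => pdu w1 p * w1 p + w1 p * pdu w1 p + pdu A p * A p + A p * pdu A p + pdu w2 p * w2 p + w2 p * pdu w2 p) =ᶠ[nhds (0:ℝ×ℝ)] (fun _ => (0:ℝ)) :=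
    (eL3u).symm.trans ((pdu_congr hQ3).trans (Filter.EventuallyEq.of_eq (pdu_const 1)))
  have E3u : pdu w1 0 * w1 0 + w1 0 * pdu w1 0 + pdu A 0 * A 0 + A 0 * pdu A 0 + pdu w2 0 * w2 0 + w2 0 * pdu w2 0 = 0 := C3u.eq_of_nhds
  have vw1u0 : pdu w1 0 = 0 := by
    simp only [h10, h01, h20, h11, h02, h30, h21, h12, h03, h40, h31, h22, h50, hκ0, vw10, vw20, vW0, vWu0, vWv0, vWuu0, vWuv0, vWuuu0, vA0, vAu0, vAv0] at E3u
    linear_combination E3u / 2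
  have ptL3v : pdv (fun p => w1 p * w1 p + A p * A p + w2 p * w2 p) 0 = 2 * (pdv w1 0) := by
    have dd0 : DifferentiableAt ℝ (w1) 0 := hDTw1.diff.self_of_nhds
    have dd1 : DifferentiableAt ℝ (A) 0 := hDTA.diff.self_of_nhds
    have dd2 : DifferentiableAt ℝ (w2) 0 := hDTw2.diff.self_of_nhds
    rw [pdv_add_pt ((dd0.fun_mul dd0).fun_add (dd1.fun_mul dd1)) (dd2.fun_mul dd2), pdv_add_pt (dd0.fun_mul dd0) (dd1.fun_mul dd1), pdv_mul_pt dd0 dd0, pdv_mul_pt dd1 dd1, pdv_mul_pt dd2 dd2]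
    try simp only [sfv, sfuv, sfvv, sfuuv, sfuvv]
    try simp only [h10, h01, h20, h11, h02, h30, h21, h12, h03, h40, h31, h22, h50, hκ0, vw10, vw20, vW0, vWu0, vWv0, vWuu0, vWuv0, vWuuu0, vA0, vAu0, vAv0, vw1u0]
    try ring
  have E3v : pdv (fun p => w1 p * w1 p + A p * A p + w2 p * w2 p) 0 = pdv (fun _ => (1:ℝ)) 0 := (pdv_congr hQ3).eq_of_nhds
  rw [ptL3v, pdv_const_pt] at E3v
  have vw1v0 : pdv w1 0 = 0 := by
    linear_combination E3v / 2
  have ptL3uu : pdu (fun p => pdu w1 p * w1 p + w1 p * pdu w1 p + pdu A p * A p + A p * pdu A p + pdu w2 p * w2 p + w2 p * pdu w2 p) 0 = 2 * (pdu (pdu w1) 0) + 2 * (pdu w2 0) * (pdu w2 0) + 2 * k1 * k1 := by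
    have dd0 : DifferentiableAt ℝ (pdu w1) 0 := hDTw1u.diff.self_of_nhds
    have dd1 : DifferentiableAt ℝ (w1) 0 := hDTw1.diff.self_of_nhds
    have dd2 : DifferentiableAt ℝ (pdu A) 0 := hDTAu.diff.self_of_nhds
    have dd3 : DifferentiableAt ℝ (A) 0 := hDTA.diff.self_of_nhds
    have dd4 : DifferentiableAt ℝ (pdu w2) 0 := hDTw2u.diff.self_of_nhds
    have dd5 : DifferentiableAt ℝ (w2) 0 := hDTw2.diff.self_of_nhds
    rw [pdu_add_pt (((((dd0.fun_mul dd1).fun_add (dd1.fun_mul dd0)).fun_add (dd2.fun_mul dd3)).fun_add (dd3.fun_mul dd2)).fun_add (dd4.fun_mul dd5)) (dd5.fun_mul dd4), pdu_add_pt ((((dd0.fun_mul dd1).fun_add (dd1.fun_mul dd0)).fun_add (dd2.fun_mul dd3)).fun_add (dd3.fun_mul dd2)) (dd4.fun_mul dd5), pdu_add_pt (((dd0.fun_mul dd1).fun_add (dd1.fun_mul dd0)).fun_add (dd2.fun_mul dd3)) (dd3.fun_mul dd2), pdu_add_pt ((dd0.fun_mul dd1).fun_add (dd1.fun_mul dd0))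 (dd2.fun_mul dd3), pdu_add_pt (dd0.fun_mul dd1) (dd1.fun_mul dd0), pdu_mul_pt dd0 dd1, pdu_mul_pt dd1 dd0, pdu_mul_pt dd2 dd3, pdu_mul_pt dd3 dd2, pdu_mul_pt dd4 dd5, pdu_mul_pt dd5 dd4]
    try simp only [sfv, sfuv, sfvv, sfuuv, sfuvv]
    try simp only [h10, h01, h20, h11, h02, h30, h21, h12, h03, h40, h31, h22, h50, hκ0, vw10, vw20, vW0, vWu0, vWv0, vWuu0, vWuv0, vWuuu0, vA0, vAu0, vAv0, vw1u0, vw1v0]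
    try ring
  have E3uu : pdu (fun p => pdu w1 p * w1 p + w1 p * pdu w1 p + pdu A p * A p + A p * pdu A p + pdu w2 p * w2 p + w2 p * pdu w2 p) 0 = pdu (fun _ => (0:ℝ)) 0 := (pdu_congr C3u).eq_of_nhds
  rw [ptL3uu, pdu_const_pt] at E3uu
  have vw1uu0 : pdu (pdu w1) 0 = (-1) * (pdu w2 0) * (pdu w2 0) + (-1) * k1 * k1 := by
    linear_combination E3uu / 2
  have ptAuu : pdu (fun p => pdu (pdu f) p * w1 p + pdu f p * pdu w1 p + pdv (pdu f) p * w2 p + pdv f p * pdu w2 p) 0 = a30 := by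
    have dd0 : DifferentiableAt ℝ (pdu (pdu f)) 0 := hDTfuu.diff.self_of_nhds
    have dd1 : DifferentiableAt ℝ (w1) 0 := hDTw1.diff.self_of_nhds
    have dd2 : DifferentiableAt ℝ (pdu f) 0 := hDTfu.diff.self_of_nhds
    have dd3 : DifferentiableAt ℝ (pdu w1) 0 := hDTw1u.diff.self_of_nhds
    have dd4 : DifferentiableAt ℝ (pdv (pdu f)) 0 := hDTfuv.diff.self_of_nhds
    have dd5 : DifferentiableAt ℝ (w2) 0 := hDTw2.diff.self_of_nhds
    have dd6 : DifferentiableAt ℝ (pdv f) 0 := hDTfv.diff.self_of_nhds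
    have dd7 : DifferentiableAt ℝ (pdu w2) 0 := hDTw2u.diff.self_of_nhds
    rw [pdu_add_pt (((dd0.fun_mul dd1).fun_add (dd2.fun_mul dd3)).fun_add (dd4.fun_mul dd5)) (dd6.fun_mul dd7), pdu_add_pt ((dd0.fun_mul dd1).fun_add (dd2.fun_mul dd3)) (dd4.fun_mul dd5), pdu_add_pt (dd0.fun_mul dd1) (dd2.fun_mul dd3), pdu_mul_pt dd0 dd1, pdu_mul_pt dd2 dd3, pdu_mul_pt dd4 dd5, pdu_mul_pt dd6 dd7]
    try simp only [sfv, sfuv, sfvv, sfuuv, sfuvv]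
    try simp only [h10, h01, h20, h11, h02, h30, h21, h12, h03, h40, h31, h22, h50, hκ0, vw10, vw20, vW0, vWu0, vWv0, vWuu0, vWuv0, vWuuu0, vA0, vAu0, vAv0, vw1u0, vw1v0, vw1uu0]
    try ring
  have EAuu : pdu (pdu A) 0 = pdu (fun p => pdu (pdu f) p * w1 p + pdu f p * pdu w1 p + pdv (pdu f) p * w2 p + pdv f p * pdu w2 p) 0 := (pdu_congr eAu).eq_of_nhds
  rw [ptAuu] at EAuu
  have vAuu0 : pdu (pdu A) 0 = a30 := by
    linear_combination EAuu
  have vY0 : Y 0 = 1 := by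
    rw [hYd]
    show w1 0 + pdu f 0 * A 0 = 1
    try simp only [h10, h01, h20, h11, h02, h30, h21, h12, h03, h40, h31, h22, h50, hκ0, vw10, vw20, vW0, vWu0, vWv0, vWuu0, vWuv0, vWuuu0, vA0, vAu0, vAv0, vw1u0, vw1v0, vw1uu0, vAuu0]
    try ring
  have eYu : pdu Y =ᶠ[nhds (0:ℝ×ℝ)] (fun p => pdu w1 p + pdu (pdu f) p * A p + pdu f p * pdu A p) := by
    rw [hYd]
    filter_upwards [hDTw1.diff, hDTfu.diff, hDTA.diff] with p dd0 dd1 dd2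
    rw [pdu_add_pt dd0 (dd1.fun_mul dd2), pdu_mul_pt dd1 dd2]
    try simp only [sfv, sfuv, sfvv, sfuuv, sfuvv]
    try ring
  have EYu : pdu Y 0 = pdu w1 0 + pdu (pdu f) 0 * A 0 + pdu f 0 * pdu A 0 := eYu.eq_of_nhds
  have vYu0 : pdu Y 0 = 0 := by
    simp only [h10, h01, h20, h11, h02, h30, h21, h12, h03, h40, h31, h22, h50, hκ0, vw10, vw20, vW0, vWu0, vWv0, vWuu0, vWuv0, vWuuu0, vA0, vAu0, vAv0, vw1u0, vw1v0, vw1uu0, vAuu0, vY0] at EYu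
    linear_combination EYu
  have vYv0 : pdv Y 0 = 0 := by
    rw [hYd]
    have dd0 : DifferentiableAt ℝ (w1) 0 := hDTw1.diff.self_of_nhds
    have dd1 : DifferentiableAt ℝ (pdu f) 0 := hDTfu.diff.self_of_nhds
    have dd2 : DifferentiableAt ℝ (A) 0 := hDTA.diff.self_of_nhds
    rw [pdv_add_pt dd0 (dd1.fun_mul dd2), pdv_mul_pt dd1 dd2]
    try simp only [sfv, sfuv, sfvv, sfuuv, sfuvv]
    try simp only [h10, h01, h20, h11, h02, h30, h21, h12, h03, h40, h31, h22, h50, hκ0, vw10, vw20, vW0, vWu0, vWv0, vWuu0, vWuv0, vWuuu0, vA0, vAu0, vAv0, vw1u0, vw1v0, vw1uu0, vAuu0, vY0, vYu0]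
    try ring
  have eYuu : pdu (fun p => pdu w1 p + pdu (pdu f) p * A p + pdu f p * pdu A p) =ᶠ[nhds (0:ℝ×ℝ)] (fun p => pdu (pdu w1) p + pdu (pdu (pdu f)) p * A p + pdu (pdu f) p * pdu A p + pdu (pdu f) p * pdu A p + pdu f p * pdu (pdu A) p) := by
    filter_upwards [hDTw1u.diff, hDTfuu.diff, hDTA.diff, hDTfu.diff, hDTAu.diff] with p dd0 dd1 dd2 dd3 dd4
    rw [pdu_add_pt (dd0.fun_add (dd1.fun_mul dd2)) (dd3.fun_mul dd4), pdu_add_pt dd0 (dd1.fun_mul dd2), pdu_mul_pt dd1 dd2, pdu_mul_pt dd3 dd4]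
    try simp only [sfv, sfuv, sfvv, sfuuv, sfuvv]
    try ring
  have CYuu := (pdu_congr eYu).trans eYuu
  have EYuu : pdu (pdu Y) 0 = pdu (pdu w1) 0 + pdu (pdu (pdu f)) 0 * A 0 + pdu (pdu f) 0 * pdu A 0 + pdu (pdu f) 0 * pdu A 0 + pdu f 0 * pdu (pdu A) 0 := CYuu.eq_of_nhds
  have vYuu0 : pdu (pdu Y) 0 = (-1) * (pdu w2 0) * (pdu w2 0) + k1 * k1 := by
    simp only [h10, h01, h20, h11, h02, h30, h21, h12, h03, h40, h31, h22, h50, hκ0, vw10, vw20, vW0, vWu0, vWv0, vWuu0, vWuv0, vWuuu0, vA0, vAu0, vAv0, vw1u0, vw1v0, vw1uu0, vAuu0, vY0, vYu0, vYv0] at EYuu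
    linear_combination EYuu
  have ptYuv : pdv (fun p => pdu w1 p + pdu (pdu f) p * A p + pdu f p * pdu A p) 0 = (pdv (pdu w1) 0) := by
    have dd0 : DifferentiableAt ℝ (pdu w1) 0 := hDTw1u.diff.self_of_nhds
    have dd1 : DifferentiableAt ℝ (pdu (pdu f)) 0 := hDTfuu.diff.self_of_nhds
    have dd2 : DifferentiableAt ℝ (A) 0 := hDTA.diff.self_of_nhds
    have dd3 : DifferentiableAt ℝ (pdu f) 0 := hDTfu.diff.self_of_nhds
    have dd4 : DifferentiableAt ℝ (pdu A) 0 := hDTAu.diff.self_of_nhds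
    rw [pdv_add_pt (dd0.fun_add (dd1.fun_mul dd2)) (dd3.fun_mul dd4), pdv_add_pt dd0 (dd1.fun_mul dd2), pdv_mul_pt dd1 dd2, pdv_mul_pt dd3 dd4]
    try simp only [sfv, sfuv, sfvv, sfuuv, sfuvv]
    try simp only [h10, h01, h20, h11, h02, h30, h21, h12, h03, h40, h31, h22, h50, hκ0, vw10, vw20, vW0, vWu0, vWv0, vWuu0, vWuv0, vWuuu0, vA0, vAu0, vAv0, vw1u0, vw1v0, vw1uu0, vAuu0, vY0, vYu0, vYv0, vYuu0]
    try ring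
  have EYuv : pdv (pdu Y) 0 = pdv (fun p => pdu w1 p + pdu (pdu f) p * A p + pdu f p * pdu A p) 0 := (pdv_congr eYu).eq_of_nhds
  rw [ptYuv] at EYuv
  have vYuv0 : pdv (pdu Y) 0 = (pdv (pdu w1) 0) := by
    linear_combination EYuv
  have ptYu3 : pdu (fun p => pdu (pdu w1) p + pdu (pdu (pdu f)) p * A p + pdu (pdu f) p * pdu A p + pdu (pdu f) p * pdu A p + pdu f p * pdu (pdu A) p) 0 = (pdu (pdu (pdu w1)) 0) + 6 * a30 * k1 := by
    have dd0 : DifferentiableAt ℝ (pdu (pdu w1)) 0 := hDTw1uu.diff.self_of_nhds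
    have dd1 : DifferentiableAt ℝ (pdu (pdu (pdu f))) 0 := hDTfuuu.diff.self_of_nhds
    have dd2 : DifferentiableAt ℝ (A) 0 := hDTA.diff.self_of_nhds
    have dd3 : DifferentiableAt ℝ (pdu (pdu f)) 0 := hDTfuu.diff.self_of_nhds
    have dd4 : DifferentiableAt ℝ (pdu A) 0 := hDTAu.diff.self_of_nhds
    have dd5 : DifferentiableAt ℝ (pdu f) 0 := hDTfu.diff.self_of_nhds
    have dd6 : DifferentiableAt ℝ (pdu (pdu A)) 0 := hDTAuu.diff.self_of_nhds
    rw [pdu_add_pt (((dd0.fun_add (dd1.fun_mul dd2)).fun_add (dd3.fun_mul dd4)).fun_add (dd3.fun_mul dd4)) (dd5.fun_mul dd6), pdu_add_pt ((dd0.fun_add (dd1.fun_mul dd2)).fun_add (dd3.fun_mul dd4)) (dd3.fun_mul dd4), pdu_add_pt (dd0.fun_add (dd1.fun_mul dd2)) (dd3.fun_mul dd4), pdu_add_pt dd0 (dd1.fun_mul dd2), pdu_mul_pt dd1 dd2, pdu_mul_pt dd3 dd4, pdu_mul_pt dd5 dd6]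
    try simp only [sfv, sfuv, sfvv, sfuuv, sfuvv]
    try simp only [h10, h01, h20, h11, h02, h30, h21, h12, h03, h40, h31, h22, h50, hκ0, vw10, vw20, vW0, vWu0, vWv0, vWuu0, vWuv0, vWuuu0, vA0, vAu0, vAv0, vw1u0, vw1v0, vw1uu0, vAuu0, vY0, vYu0, vYv0, vYuu0, vYuv0]
    try ring
  have EYu3 : pdu (pdu (pdu Y)) 0 = pdu (fun p => pdu (pdu w1) p + pdu (pdu (pdu f)) p * A p + pdu (pdu f) p * pdu A p + pdu (pdu f) p * pdu A p + pdu f p * pdu (pdu A) p) 0 := (pdu_congr CYuu).eq_of_nhds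
  rw [ptYu3] at EYu3
  have vYuuu0 : pdu (pdu (pdu Y)) 0 = (pdu (pdu (pdu w1)) 0) + 6 * a30 * k1 := by
    linear_combination EYu3
  have vX0 : X 0 = 0 := by
    rw [hXd]
    show w2 0 + pdv f 0 * A 0 = 0
    try simp only [h10, h01, h20, h11, h02, h30, h21, h12, h03, h40, h31, h22, h50, hκ0, vw10, vw20, vW0, vWu0, vWv0, vWuu0, vWuv0, vWuuu0, vA0, vAu0, vAv0, vw1u0, vw1v0, vw1uu0, vAuu0, vY0, vYu0, vYv0, vYuu0, vYuv0, vYuuu0]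
    try ring
  have eXu : pdu X =ᶠ[nhds (0:ℝ×ℝ)] (fun p => pdu w2 p + pdv (pdu f) p * A p + pdv f p * pdu A p) := by
    rw [hXd]
    filter_upwards [hDTw2.diff, hDTfv.diff, hDTA.diff] with p dd0 dd1 dd2
    rw [pdu_add_pt dd0 (dd1.fun_mul dd2), pdu_mul_pt dd1 dd2]
    try simp only [sfv, sfuv, sfvv, sfuuv, sfuvv]
    try ring
  have EXu : pdu X 0 = pdu w2 0 + pdv (pdu f) 0 * A 0 + pdv f 0 * pdu A 0 := eXu.eq_of_nhds
  have vXu0 : pdu X 0 = (pdu w2 0) := by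
    simp only [h10, h01, h20, h11, h02, h30, h21, h12, h03, h40, h31, h22, h50, hκ0, vw10, vw20, vW0, vWu0, vWv0, vWuu0, vWuv0, vWuuu0, vA0, vAu0, vAv0, vw1u0, vw1v0, vw1uu0, vAuu0, vY0, vYu0, vYv0, vYuu0, vYuv0, vYuuu0, vX0] at EXu
    linear_combination EXu
  have vXv0 : pdv X 0 = (pdv w2 0) := by
    rw [hXd]
    have dd0 : DifferentiableAt ℝ (w2) 0 := hDTw2.diff.self_of_nhds
    have dd1 : DifferentiableAt ℝ (pdv f) 0 := hDTfv.diff.self_of_nhds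
    have dd2 : DifferentiableAt ℝ (A) 0 := hDTA.diff.self_of_nhds
    rw [pdv_add_pt dd0 (dd1.fun_mul dd2), pdv_mul_pt dd1 dd2]
    try simp only [sfv, sfuv, sfvv, sfuuv, sfuvv]
    try simp only [h10, h01, h20, h11, h02, h30, h21, h12, h03, h40, h31, h22, h50, hκ0, vw10, vw20, vW0, vWu0, vWv0, vWuu0, vWuv0, vWuuu0, vA0, vAu0, vAv0, vw1u0, vw1v0, vw1uu0, vAuu0, vY0, vYu0, vYv0, vYuu0, vYuv0, vYuuu0, vX0, vXu0]
    try ring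
  have ptXuu : pdu (fun p => pdu w2 p + pdv (pdu f) p * A p + pdv f p * pdu A p) 0 = (pdu (pdu w2) 0) := by
    have dd0 : DifferentiableAt ℝ (pdu w2) 0 := hDTw2u.diff.self_of_nhds
    have dd1 : DifferentiableAt ℝ (pdv (pdu f)) 0 := hDTfuv.diff.self_of_nhds
    have dd2 : DifferentiableAt ℝ (A) 0 := hDTA.diff.self_of_nhds
    have dd3 : DifferentiableAt ℝ (pdv f) 0 := hDTfv.diff.self_of_nhds
    have dd4 : DifferentiableAt ℝ (pdu A) 0 := hDTAu.diff.self_of_nhds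
    rw [pdu_add_pt (dd0.fun_add (dd1.fun_mul dd2)) (dd3.fun_mul dd4), pdu_add_pt dd0 (dd1.fun_mul dd2), pdu_mul_pt dd1 dd2, pdu_mul_pt dd3 dd4]
    try simp only [sfv, sfuv, sfvv, sfuuv, sfuvv]
    try simp only [h10, h01, h20, h11, h02, h30, h21, h12, h03, h40, h31, h22, h50, hκ0, vw10, vw20, vW0, vWu0, vWv0, vWuu0, vWuv0, vWuuu0, vA0, vAu0, vAv0, vw1u0, vw1v0, vw1uu0, vAuu0, vY0, vYu0, vYv0, vYuu0, vYuv0, vYuuu0, vX0, vXu0, vXv0]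
    try ring
  have EXuu : pdu (pdu X) 0 = pdu (fun p => pdu w2 p + pdv (pdu f) p * A p + pdv f p * pdu A p) 0 := (pdu_congr eXu).eq_of_nhds
  rw [ptXuu] at EXuu
  have vXuu0 : pdu (pdu X) 0 = (pdu (pdu w2) 0) := by
    linear_combination EXuu
  have eL2u : pdu (fun p => pdv (pdu f) p * w1 p + pdv (pdv f) p * w2 p) =ᶠ[nhds (0:ℝ×ℝ)] (fun p => pdv (pdu (pdu f)) p * w1 p + pdv (pdu f) p * pdu w1 p + pdv (pdv (pdu f)) p * w2 p + pdv (pdv f) p * pdu w2 p) := by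
    filter_upwards [hDTfuv.diff, hDTw1.diff, hDTfvv.diff, hDTw2.diff] with p dd0 dd1 dd2 dd3
    rw [pdu_add_pt (dd0.fun_mul dd1) (dd2.fun_mul dd3), pdu_mul_pt dd0 dd1, pdu_mul_pt dd2 dd3]
    try simp only [sfv, sfuv, sfvv, sfuuv, sfuvv]
    try ring
  have eR2u : pdu (fun p => κ p * Wq p * X p) =ᶠ[nhds (0:ℝ×ℝ)] (fun p => pdu κ p * Wq p * X p + κ p * pdu Wq p * X p + κ p * Wq p * pdu X p) := by
    filter_upwards [hDTk.diff, hDTW.diff, hDTX.diff] with p dd0 dd1 dd2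
    rw [pdu_mul3_pt dd0 dd1 dd2]
    try simp only [sfv, sfuv, sfvv, sfuuv, sfuvv]
    try ring
  have C2u := (eL2u).symm.trans ((pdu_congr hQ2).trans eR2u)
  have E2u : pdv (pdu (pdu f)) 0 * w1 0 + pdv (pdu f) 0 * pdu w1 0 + pdv (pdv (pdu f)) 0 * w2 0 + pdv (pdv f) 0 * pdu w2 0 = pdu κ 0 * Wq 0 * X 0 + κ 0 * pdu Wq 0 * X 0 + κ 0 * Wq 0 * pdu X 0 := C2u.eq_of_nhds
  have vw2u0 : (k1 - k2) * pdu w2 0 = a21 := by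
    simp only [h10, h01, h20, h11, h02, h30, h21, h12, h03, h40, h31, h22, h50, hκ0, vw10, vw20, vW0, vWu0, vWv0, vWuu0, vWuv0, vWuuu0, vA0, vAu0, vAv0, vw1u0, vw1v0, vw1uu0, vAuu0, vY0, vYu0, vYv0, vYuu0, vYuv0, vYuuu0, vX0, vXu0, vXv0, vXuu0] at E2u
    linear_combination -E2u
  have ptL2v : pdv (fun p => pdv (pdu f) p * w1 p + pdv (pdv f) p * w2 p) 0 = (pdv w2 0) * k2 + a12 := by
    have dd0 : DifferentiableAt ℝ (pdv (pdu f)) 0 := hDTfuv.diff.self_of_nhds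
    have dd1 : DifferentiableAt ℝ (w1) 0 := hDTw1.diff.self_of_nhds
    have dd2 : DifferentiableAt ℝ (pdv (pdv f)) 0 := hDTfvv.diff.self_of_nhds
    have dd3 : DifferentiableAt ℝ (w2) 0 := hDTw2.diff.self_of_nhds
    rw [pdv_add_pt (dd0.fun_mul dd1) (dd2.fun_mul dd3), pdv_mul_pt dd0 dd1, pdv_mul_pt dd2 dd3]
    try simp only [sfv, sfuv, sfvv, sfuuv, sfuvv]
    try simp only [h10, h01, h20, h11, h02, h30, h21, h12, h03, h40, h31, h22, h50, hκ0, vw10, vw20, vW0, vWu0, vWv0, vWuu0, vWuv0, vWuuu0, vA0, vAu0, vAv0, vw1u0, vw1v0, vw1uu0, vAuu0, vY0, vYu0, vYv0, vYuu0, vYuv0, vYuuu0, vX0, vXu0, vXv0, vXuu0]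
    try ring
  have ptR2v : pdv (fun p => κ p * Wq p * X p) 0 = (pdv w2 0) * k1 := by
    have dd0 : DifferentiableAt ℝ (κ) 0 := hDTk.diff.self_of_nhds
    have dd1 : DifferentiableAt ℝ (Wq) 0 := hDTW.diff.self_of_nhds
    have dd2 : DifferentiableAt ℝ (X) 0 := hDTX.diff.self_of_nhds
    rw [pdv_mul3_pt dd0 dd1 dd2]
    try simp only [sfv, sfuv, sfvv, sfuuv, sfuvv]
    try simp only [h10, h01, h20, h11, h02, h30, h21, h12, h03, h40, h31, h22, h50, hκ0, vw10, vw20, vW0, vWu0, vWv0, vWuu0, vWuv0, vWuuu0, vA0, vAu0, vAv0, vw1u0, vw1v0, vw1uu0, vAuu0, vY0, vYu0, vYv0, vYuu0, vYuv0, vYuuu0, vX0, vXu0, vXv0, vXuu0]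
    try ring
  have E2v : pdv (fun p => pdv (pdu f) p * w1 p + pdv (pdv f) p * w2 p) 0 = pdv (fun p => κ p * Wq p * X p) 0 := (pdv_congr hQ2).eq_of_nhds
  rw [ptL2v, ptR2v] at E2v
  have vw2v0 : (k1 - k2) * pdv w2 0 = a12 := by
    linear_combination -E2v
  have eL1u : pdu (fun p => pdu (pdu f) p * w1 p + pdv (pdu f) p * w2 p) =ᶠ[nhds (0:ℝ×ℝ)] (fun p => pdu (pdu (pdu f)) p * w1 p + pdu (pdu f) p * pdu w1 p + pdv (pdu (pdu f)) p * w2 p + pdv (pdu f) p * pdu w2 p) := by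
    filter_upwards [hDTfuu.diff, hDTw1.diff, hDTfuv.diff, hDTw2.diff] with p dd0 dd1 dd2 dd3
    rw [pdu_add_pt (dd0.fun_mul dd1) (dd2.fun_mul dd3), pdu_mul_pt dd0 dd1, pdu_mul_pt dd2 dd3]
    try simp only [sfv, sfuv, sfvv, sfuuv, sfuvv]
    try ring
  have eR1u : pdu (fun p => κ p * Wq p * Y p) =ᶠ[nhds (0:ℝ×ℝ)] (fun p => pdu κ p * Wq p * Y p + κ p * pdu Wq p * Y p + κ p * Wq p * pdu Y p) := by
    filter_upwards [hDTk.diff, hDTW.diff, hDTY.diff] with p dd0 dd1 dd2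
    rw [pdu_mul3_pt dd0 dd1 dd2]
    try simp only [sfv, sfuv, sfvv, sfuuv, sfuvv]
    try ring
  have C1u := (eL1u).symm.trans ((pdu_congr hQ1).trans eR1u)
  have E1u : pdu (pdu (pdu f)) 0 * w1 0 + pdu (pdu f) 0 * pdu w1 0 + pdv (pdu (pdu f)) 0 * w2 0 + pdv (pdu f) 0 * pdu w2 0 = pdu κ 0 * Wq 0 * Y 0 + κ 0 * pdu Wq 0 * Y 0 + κ 0 * Wq 0 * pdu Y 0 := C1u.eq_of_nhds
  have vκu0 : pdu κ 0 = a30 := by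
    simp only [h10, h01, h20, h11, h02, h30, h21, h12, h03, h40, h31, h22, h50, hκ0, vw10, vw20, vW0, vWu0, vWv0, vWuu0, vWuv0, vWuuu0, vA0, vAu0, vAv0, vw1u0, vw1v0, vw1uu0, vAuu0, vY0, vYu0, vYv0, vYuu0, vYuv0, vYuuu0, vX0, vXu0, vXv0, vXuu0] at E1u
    linear_combination -E1u
  have ptL1v : pdv (fun p => pdu (pdu f) p * w1 p + pdv (pdu f) p * w2 p) 0 = a21 := by
    have dd0 : DifferentiableAt ℝ (pdu (pdu f)) 0 := hDTfuu.diff.self_of_nhds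
    have dd1 : DifferentiableAt ℝ (w1) 0 := hDTw1.diff.self_of_nhds
    have dd2 : DifferentiableAt ℝ (pdv (pdu f)) 0 := hDTfuv.diff.self_of_nhds
    have dd3 : DifferentiableAt ℝ (w2) 0 := hDTw2.diff.self_of_nhds
    rw [pdv_add_pt (dd0.fun_mul dd1) (dd2.fun_mul dd3), pdv_mul_pt dd0 dd1, pdv_mul_pt dd2 dd3]
    try simp only [sfv, sfuv, sfvv, sfuuv, sfuvv]
    try simp only [h10, h01, h20, h11, h02, h30, h21, h12, h03, h40, h31, h22, h50, hκ0, vw10, vw20, vW0, vWu0, vWv0, vWuu0, vWuv0, vWuuu0, vA0, vAu0, vAv0, vw1u0, vw1v0, vw1uu0, vAuu0, vY0, vYu0, vYv0, vYuu0, vYuv0, vYuuu0, vX0, vXu0, vXv0, vXuu0, vκu0]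
    try ring
  have ptR1v : pdv (fun p => κ p * Wq p * Y p) 0 = (pdv κ 0) := by
    have dd0 : DifferentiableAt ℝ (κ) 0 := hDTk.diff.self_of_nhds
    have dd1 : DifferentiableAt ℝ (Wq) 0 := hDTW.diff.self_of_nhds
    have dd2 : DifferentiableAt ℝ (Y) 0 := hDTY.diff.self_of_nhds
    rw [pdv_mul3_pt dd0 dd1 dd2]
    try simp only [sfv, sfuv, sfvv, sfuuv, sfuvv]
    try simp only [h10, h01, h20, h11, h02, h30, h21, h12, h03, h40, h31, h22, h50, hκ0, vw10, vw20, vW0, vWu0, vWv0, vWuu0, vWuv0, vWuuu0, vA0, vAu0, vAv0, vw1u0, vw1v0, vw1uu0, vAuu0, vY0, vYu0, vYv0, vYuu0, vYuv0, vYuuu0, vX0, vXu0, vXv0, vXuu0, vκu0]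
    try ring
  have E1v : pdv (fun p => pdu (pdu f) p * w1 p + pdv (pdu f) p * w2 p) 0 = pdv (fun p => κ p * Wq p * Y p) 0 := (pdv_congr hQ1).eq_of_nhds
  rw [ptL1v, ptR1v] at E1v
  have vκv0 : pdv κ 0 = a21 := by
    linear_combination -E1v
  have ptL2uu : pdu (fun p => pdv (pdu (pdu f)) p * w1 p + pdv (pdu f) p * pdu w1 p + pdv (pdv (pdu f)) p * w2 p + pdv (pdv f) p * pdu w2 p) 0 = (pdu (pdu w2) 0) * k2 + 2 * (pdu w2 0) * a12 + a31 := by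
    have dd0 : DifferentiableAt ℝ (pdv (pdu (pdu f))) 0 := hDTfuuv.diff.self_of_nhds
    have dd1 : DifferentiableAt ℝ (w1) 0 := hDTw1.diff.self_of_nhds
    have dd2 : DifferentiableAt ℝ (pdv (pdu f)) 0 := hDTfuv.diff.self_of_nhds
    have dd3 : DifferentiableAt ℝ (pdu w1) 0 := hDTw1u.diff.self_of_nhds
    have dd4 : DifferentiableAt ℝ (pdv (pdv (pdu f))) 0 := hDTfuvv.diff.self_of_nhds
    have dd5 : DifferentiableAt ℝ (w2) 0 := hDTw2.diff.self_of_nhds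
    have dd6 : DifferentiableAt ℝ (pdv (pdv f)) 0 := hDTfvv.diff.self_of_nhds
    have dd7 : DifferentiableAt ℝ (pdu w2) 0 := hDTw2u.diff.self_of_nhds
    rw [pdu_add_pt (((dd0.fun_mul dd1).fun_add (dd2.fun_mul dd3)).fun_add (dd4.fun_mul dd5)) (dd6.fun_mul dd7), pdu_add_pt ((dd0.fun_mul dd1).fun_add (dd2.fun_mul dd3)) (dd4.fun_mul dd5), pdu_add_pt (dd0.fun_mul dd1) (dd2.fun_mul dd3), pdu_mul_pt dd0 dd1, pdu_mul_pt dd2 dd3, pdu_mul_pt dd4 dd5, pdu_mul_pt dd6 dd7]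
    try simp only [sfv, sfuv, sfvv, sfuuv, sfuvv]
    try simp only [h10, h01, h20, h11, h02, h30, h21, h12, h03, h40, h31, h22, h50, hκ0, vw10, vw20, vW0, vWu0, vWv0, vWuu0, vWuv0, vWuuu0, vA0, vAu0, vAv0, vw1u0, vw1v0, vw1uu0, vAuu0, vY0, vYu0, vYv0, vYuu0, vYuv0, vYuuu0, vX0, vXu0, vXv0, vXuu0, vκu0, vκv0]
    try ring
  have ptR2uu : pdu (fun p => pdu κ p * Wq p * X p + κ p * pdu Wq p * X p + κ p * Wq p * pdu X p) 0 = (pdu (pdu w2) 0) * k1 + 2 * (pdu w2 0) * a30 := by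
    have dd0 : DifferentiableAt ℝ (pdu κ) 0 := hDTku.diff.self_of_nhds
    have dd1 : DifferentiableAt ℝ (Wq) 0 := hDTW.diff.self_of_nhds
    have dd2 : DifferentiableAt ℝ (X) 0 := hDTX.diff.self_of_nhds
    have dd3 : DifferentiableAt ℝ (κ) 0 := hDTk.diff.self_of_nhds
    have dd4 : DifferentiableAt ℝ (pdu Wq) 0 := hDTWu.diff.self_of_nhds
    have dd5 : DifferentiableAt ℝ (pdu X) 0 := hDTXu.diff.self_of_nhds
    rw [pdu_add_pt (((dd0.fun_mul dd1).fun_mul dd2).fun_add ((dd3.fun_mul dd4).fun_mul dd2)) ((dd3.fun_mul dd1).fun_mul dd5), pdu_add_pt ((dd0.fun_mul dd1).fun_mul dd2) ((dd3.fun_mul dd4).fun_mul dd2), pdu_mul3_pt dd0 dd1 dd2, pdu_mul3_pt dd3 dd4 dd2, pdu_mul3_pt dd3 dd1 dd5]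
    try simp only [sfv, sfuv, sfvv, sfuuv, sfuvv]
    try simp only [h10, h01, h20, h11, h02, h30, h21, h12, h03, h40, h31, h22, h50, hκ0, vw10, vw20, vW0, vWu0, vWv0, vWuu0, vWuv0, vWuuu0, vA0, vAu0, vAv0, vw1u0, vw1v0, vw1uu0, vAuu0, vY0, vYu0, vYv0, vYuu0, vYuv0, vYuuu0, vX0, vXu0, vXv0, vXuu0, vκu0, vκv0]
    try ring
  have E2uu : pdu (fun p => pdv (pdu (pdu f)) p * w1 p + pdv (pdu f) p * pdu w1 p + pdv (pdv (pdu f)) p * w2 p + pdv (pdv f) p * pdu w2 p) 0 = pdu (fun p => pdu κ p * Wq p * X p + κ p * pdu Wq p * X p + κ p * Wq p * pdu X p) 0 := (pdu_congr C2u).eq_of_nhds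
  rw [ptL2uu, ptR2uu] at E2uu
  have vw2uu0 : (k1 - k2) * pdu (pdu w2) 0 = 2 * (pdu w2 0) * a12 + (-2) * (pdu w2 0) * a30 + a31 := by
    linear_combination -E2uu
  have eL1uu : pdu (fun p => pdu (pdu (pdu f)) p * w1 p + pdu (pdu f) p * pdu w1 p + pdv (pdu (pdu f)) p * w2 p + pdv (pdu f) p * pdu w2 p) =ᶠ[nhds (0:ℝ×ℝ)] (fun p => pdu (pdu (pdu (pdu f))) p * w1 p + pdu (pdu (pdu f)) p * pdu w1 p + pdu (pdu (pdu f)) p * pdu w1 p + pdu (pdu f) p * pdu (pdu w1) p + pdv (pdu (pdu (pdu f))) p * w2 p + pdv (pdu (pdu f)) p * pdu w2 p + pdv (pdu (pdu f)) p * pdu w2 p + pdv (pdu f) p * pdu (pdu w2) p) := by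
    filter_upwards [hDTfuuu.diff, hDTw1.diff, hDTfuu.diff, hDTw1u.diff, hDTfuuv.diff, hDTw2.diff, hDTfuv.diff, hDTw2u.diff] with p dd0 dd1 dd2 dd3 dd4 dd5 dd6 dd7
    rw [pdu_add_pt (((dd0.fun_mul dd1).fun_add (dd2.fun_mul dd3)).fun_add (dd4.fun_mul dd5)) (dd6.fun_mul dd7), pdu_add_pt ((dd0.fun_mul dd1).fun_add (dd2.fun_mul dd3)) (dd4.fun_mul dd5), pdu_add_pt (dd0.fun_mul dd1) (dd2.fun_mul dd3), pdu_mul_pt dd0 dd1, pdu_mul_pt dd2 dd3, pdu_mul_pt dd4 dd5, pdu_mul_pt dd6 dd7]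
    try simp only [sfv, sfuv, sfvv, sfuuv, sfuvv]
    try ring
  have eR1uu : pdu (fun p => pdu κ p * Wq p * Y p + κ p * pdu Wq p * Y p + κ p * Wq p * pdu Y p) =ᶠ[nhds (0:ℝ×ℝ)] (fun p => pdu (pdu κ) p * Wq p * Y p + pdu κ p * pdu Wq p * Y p + pdu κ p * Wq p * pdu Y p + pdu κ p * pdu Wq p * Y p + κ p * pdu (pdu Wq) p * Y p + κ p * pdu Wq p * pdu Y p + pdu κ p * Wq p * pdu Y p + κ p * pdu Wq p * pdu Y p + κ p * Wq p * pdu (pdu Y) p) := by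
    filter_upwards [hDTku.diff, hDTW.diff, hDTY.diff, hDTk.diff, hDTWu.diff, hDTYu.diff] with p dd0 dd1 dd2 dd3 dd4 dd5
    rw [pdu_add_pt (((dd0.fun_mul dd1).fun_mul dd2).fun_add ((dd3.fun_mul dd4).fun_mul dd2)) ((dd3.fun_mul dd1).fun_mul dd5), pdu_add_pt ((dd0.fun_mul dd1).fun_mul dd2) ((dd3.fun_mul dd4).fun_mul dd2), pdu_mul3_pt dd0 dd1 dd2, pdu_mul3_pt dd3 dd4 dd2, pdu_mul3_pt dd3 dd1 dd5]
    try simp only [sfv, sfuv, sfvv, sfuuv, sfuvv]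
    try ring
  have C1uu := (eL1uu).symm.trans ((pdu_congr C1u).trans eR1uu)
  have E1uu : pdu (pdu (pdu (pdu f))) 0 * w1 0 + pdu (pdu (pdu f)) 0 * pdu w1 0 + pdu (pdu (pdu f)) 0 * pdu w1 0 + pdu (pdu f) 0 * pdu (pdu w1) 0 + pdv (pdu (pdu (pdu f))) 0 * w2 0 + pdv (pdu (pdu f)) 0 * pdu w2 0 + pdv (pdu (pdu f)) 0 * pdu w2 0 + pdv (pdu f) 0 * pdu (pdu w2) 0 = pdu (pdu κ) 0 * Wq 0 * Y 0 + pdu κ 0 * pdu Wq 0 * Y 0 + pdu κ 0 * Wq 0 * pdu Y 0 + pdu κ 0 * pdu Wq 0 * Y 0 + κ 0 * pdu (pdu Wq) 0 * Y 0 + κ 0 * pdu Wq 0 * pdu Y 0 + pdu κ 0 * Wq 0 * pdu Y 0 + κ 0 * pdu Wq 0 * pdu Y 0 + κ 0 * Wq 0 * pdu (pdu Y) 0 := C1uu.eq_of_nhds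
  have vκuu0 : pdu (pdu κ) 0 = 2 * (pdu w2 0) * a21 + a40 + (-3) * k1 * k1 * k1 := by
    simp only [h10, h01, h20, h11, h02, h30, h21, h12, h03, h40, h31, h22, h50, hκ0, vw10, vw20, vW0, vWu0, vWv0, vWuu0, vWuv0, vWuuu0, vA0, vAu0, vAv0, vw1u0, vw1v0, vw1uu0, vAuu0, vY0, vYu0, vYv0, vYuu0, vYuv0, vYuuu0, vX0, vXu0, vXv0, vXuu0, vκu0, vκv0] at E1uu
    linear_combination -E1uu
  have ptL1uv : pdv (fun p => pdu (pdu (pdu f)) p * w1 p + pdu (pdu f) p * pdu w1 p + pdv (pdu (pdu f)) p * w2 p + pdv (pdu f) p * pdu w2 p) 0 = (pdu w2 0) * a12 + (pdv (pdu w1) 0) * k1 + (pdv w2 0) * a21 + a31 := by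
    have dd0 : DifferentiableAt ℝ (pdu (pdu (pdu f))) 0 := hDTfuuu.diff.self_of_nhds
    have dd1 : DifferentiableAt ℝ (w1) 0 := hDTw1.diff.self_of_nhds
    have dd2 : DifferentiableAt ℝ (pdu (pdu f)) 0 := hDTfuu.diff.self_of_nhds
    have dd3 : DifferentiableAt ℝ (pdu w1) 0 := hDTw1u.diff.self_of_nhds
    have dd4 : DifferentiableAt ℝ (pdv (pdu (pdu f))) 0 := hDTfuuv.diff.self_of_nhds
    have dd5 : DifferentiableAt ℝ (w2) 0 := hDTw2.diff.self_of_nhds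
    have dd6 : DifferentiableAt ℝ (pdv (pdu f)) 0 := hDTfuv.diff.self_of_nhds
    have dd7 : DifferentiableAt ℝ (pdu w2) 0 := hDTw2u.diff.self_of_nhds
    rw [pdv_add_pt (((dd0.fun_mul dd1).fun_add (dd2.fun_mul dd3)).fun_add (dd4.fun_mul dd5)) (dd6.fun_mul dd7), pdv_add_pt ((dd0.fun_mul dd1).fun_add (dd2.fun_mul dd3)) (dd4.fun_mul dd5), pdv_add_pt (dd0.fun_mul dd1) (dd2.fun_mul dd3), pdv_mul_pt dd0 dd1, pdv_mul_pt dd2 dd3, pdv_mul_pt dd4 dd5, pdv_mul_pt dd6 dd7]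
    try simp only [sfv, sfuv, sfvv, sfuuv, sfuvv]
    try simp only [h10, h01, h20, h11, h02, h30, h21, h12, h03, h40, h31, h22, h50, hκ0, vw10, vw20, vW0, vWu0, vWv0, vWuu0, vWuv0, vWuuu0, vA0, vAu0, vAv0, vw1u0, vw1v0, vw1uu0, vAuu0, vY0, vYu0, vYv0, vYuu0, vYuv0, vYuuu0, vX0, vXu0, vXv0, vXuu0, vκu0, vκv0, vκuu0]
    try ring
  have ptR1uv : pdv (fun p => pdu κ p * Wq p * Y p + κ p * pdu Wq p * Y p + κ p * Wq p * pdu Y p) 0 = (pdv (pdu w1) 0) * k1 + (pdv (pdu κ) 0) := by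
    have dd0 : DifferentiableAt ℝ (pdu κ) 0 := hDTku.diff.self_of_nhds
    have dd1 : DifferentiableAt ℝ (Wq) 0 := hDTW.diff.self_of_nhds
    have dd2 : DifferentiableAt ℝ (Y) 0 := hDTY.diff.self_of_nhds
    have dd3 : DifferentiableAt ℝ (κ) 0 := hDTk.diff.self_of_nhds
    have dd4 : DifferentiableAt ℝ (pdu Wq) 0 := hDTWu.diff.self_of_nhds
    have dd5 : DifferentiableAt ℝ (pdu Y) 0 := hDTYu.diff.self_of_nhds
    rw [pdv_add_pt (((dd0.fun_mul dd1).fun_mul dd2).fun_add ((dd3.fun_mul dd4).fun_mul dd2)) ((dd3.fun_mul dd1).fun_mul dd5), pdv_add_pt ((dd0.fun_mul dd1).fun_mul dd2) ((dd3.fun_mul dd4).fun_mul dd2), pdv_mul3_pt dd0 dd1 dd2, pdv_mul3_pt dd3 dd4 dd2, pdv_mul3_pt dd3 dd1 dd5]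
    try simp only [sfv, sfuv, sfvv, sfuuv, sfuvv]
    try simp only [h10, h01, h20, h11, h02, h30, h21, h12, h03, h40, h31, h22, h50, hκ0, vw10, vw20, vW0, vWu0, vWv0, vWuu0, vWuv0, vWuuu0, vA0, vAu0, vAv0, vw1u0, vw1v0, vw1uu0, vAuu0, vY0, vYu0, vYv0, vYuu0, vYuv0, vYuuu0, vX0, vXu0, vXv0, vXuu0, vκu0, vκv0, vκuu0]
    try ring
  have E1uv : pdv (fun p => pdu (pdu (pdu f)) p * w1 p + pdu (pdu f) p * pdu w1 p + pdv (pdu (pdu f)) p * w2 p + pdv (pdu f) p * pdu w2 p) 0 = pdv (fun p => pdu κ p * Wq p * Y p + κ p * pdu Wq p * Y p + κ p * Wq p * pdu Y p) 0 := (pdv_congr C1u).eq_of_nhds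
  rw [ptL1uv, ptR1uv] at E1uv
  have vκuv0 : pdv (pdu κ) 0 = (pdu w2 0) * a12 + (pdv w2 0) * a21 + a31 := by
    linear_combination -E1uv
  have vκvu0 : pdu (pdv κ) 0 = (pdu w2 0) * a12 + (pdv w2 0) * a21 + a31 := by rw [vκsym]; exact vκuv0
  have ptL1u3 : pdu (fun p => pdu (pdu (pdu (pdu f))) p * w1 p + pdu (pdu (pdu f)) p * pdu w1 p + pdu (pdu (pdu f)) p * pdu w1 p + pdu (pdu f) p * pdu (pdu w1) p + pdv (pdu (pdu (pdu f))) p * w2 p + pdv (pdu (pdu f)) p * pdu w2 p + pdv (pdu (pdu f)) p * pdu w2 p + pdv (pdu f) p * pdu (pdu w2) p) 0 = (pdu (pdu (pdu w1)) 0) * k1 + 3 * (pdu (pdu w2) 0) * a21 + (-3) * (pdu w2 0) * (pdu w2 0) * a30 + 3 * (pdu w2 0) * a31 + (-3) * a30 * k1 * k1 + a50 := by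
    have dd0 : DifferentiableAt ℝ (pdu (pdu (pdu (pdu f)))) 0 := hDTf40.diff.self_of_nhds
    have dd1 : DifferentiableAt ℝ (w1) 0 := hDTw1.diff.self_of_nhds
    have dd2 : DifferentiableAt ℝ (pdu (pdu (pdu f))) 0 := hDTfuuu.diff.self_of_nhds
    have dd3 : DifferentiableAt ℝ (pdu w1) 0 := hDTw1u.diff.self_of_nhds
    have dd4 : DifferentiableAt ℝ (pdu (pdu f)) 0 := hDTfuu.diff.self_of_nhds
    have dd5 : DifferentiableAt ℝ (pdu (pdu w1)) 0 := hDTw1uu.diff.self_of_nhds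
    have dd6 : DifferentiableAt ℝ (pdv (pdu (pdu (pdu f)))) 0 := hDTf31.diff.self_of_nhds
    have dd7 : DifferentiableAt ℝ (w2) 0 := hDTw2.diff.self_of_nhds
    have dd8 : DifferentiableAt ℝ (pdv (pdu (pdu f))) 0 := hDTfuuv.diff.self_of_nhds
    have dd9 : DifferentiableAt ℝ (pdu w2) 0 := hDTw2u.diff.self_of_nhds
    have dd10 : DifferentiableAt ℝ (pdv (pdu f)) 0 := hDTfuv.diff.self_of_nhds
    have dd11 : DifferentiableAt ℝ (pdu (pdu w2)) 0 := hDTw2uu.diff.self_of_nhds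
    rw [pdu_add_pt (((((((dd0.fun_mul dd1).fun_add (dd2.fun_mul dd3)).fun_add (dd2.fun_mul dd3)).fun_add (dd4.fun_mul dd5)).fun_add (dd6.fun_mul dd7)).fun_add (dd8.fun_mul dd9)).fun_add (dd8.fun_mul dd9)) (dd10.fun_mul dd11), pdu_add_pt ((((((dd0.fun_mul dd1).fun_add (dd2.fun_mul dd3)).fun_add (dd2.fun_mul dd3)).fun_add (dd4.fun_mul dd5)).fun_add (dd6.fun_mul dd7)).fun_add (dd8.fun_mul dd9)) (dd8.fun_mul dd9), pdu_add_pt (((((dd0.fun_mul dd1).fun_add (dd2.fun_mul dd3)).fun_add (dd2.fun_mul dd3)).fun_add (dd4.fun_mul dd5)).fun_add (dd6.fun_mul dd7)) (dd8.fun_mul dd9), pdu_add_pt ((((dd0.fun_mul dd1).fun_add (dd2.fun_mul dd3)).fun_add (dd2.fun_mul dd3)).fun_add (dd4.fun_mul dd5)) (dd6.fun_mul dd7), pdu_add_pt (((dd0.fun_mul dd1).fun_add (dd2.fun_mul dd3)).fun_add (dd2.fun_mul dd3)) (dd4.fun_mul dd5), pdu_add_pt ((dd0.fun_mul dd1).fun_add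 (dd2.fun_mul dd3)) (dd2.fun_mul dd3), pdu_add_pt (dd0.fun_mul dd1) (dd2.fun_mul dd3), pdu_mul_pt dd0 dd1, pdu_mul_pt dd2 dd3, pdu_mul_pt dd4 dd5, pdu_mul_pt dd6 dd7, pdu_mul_pt dd8 dd9, pdu_mul_pt dd10 dd11]
    try simp only [sfv, sfuv, sfvv, sfuuv, sfuvv]
    try simp only [h10, h01, h20, h11, h02, h30, h21, h12, h03, h40, h31, h22, h50, hκ0, vw10, vw20, vW0, vWu0, vWv0, vWuu0, vWuv0, vWuuu0, vA0, vAu0, vAv0, vw1u0, vw1v0, vw1uu0, vAuu0, vY0, vYu0, vYv0, vYuu0, vYuv0, vYuuu0, vX0, vXu0, vXv0, vXuu0, vκu0, vκv0, vκuu0, vκuv0, vκvu0]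
    try ring
  have ptR1u3 : pdu (fun p => pdu (pdu κ) p * Wq p * Y p + pdu κ p * pdu Wq p * Y p + pdu κ p * Wq p * pdu Y p + pdu κ p * pdu Wq p * Y p + κ p * pdu (pdu Wq) p * Y p + κ p * pdu Wq p * pdu Y p + pdu κ p * Wq p * pdu Y p + κ p * pdu Wq p * pdu Y p + κ p * Wq p * pdu (pdu Y) p) 0 = (pdu (pdu (pdu w1)) 0) * k1 + (pdu (pdu (pdu κ)) 0) + (-3) * (pdu w2 0) * (pdu w2 0) * a30 + 15 * a30 * k1 * k1 := by
    have dd0 : DifferentiableAt ℝ (pdu (pdu κ)) 0 := hDTkuu.diff.self_of_nhds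
    have dd1 : DifferentiableAt ℝ (Wq) 0 := hDTW.diff.self_of_nhds
    have dd2 : DifferentiableAt ℝ (Y) 0 := hDTY.diff.self_of_nhds
    have dd3 : DifferentiableAt ℝ (pdu κ) 0 := hDTku.diff.self_of_nhds
    have dd4 : DifferentiableAt ℝ (pdu Wq) 0 := hDTWu.diff.self_of_nhds
    have dd5 : DifferentiableAt ℝ (pdu Y) 0 := hDTYu.diff.self_of_nhds
    have dd6 : DifferentiableAt ℝ (κ) 0 := hDTk.diff.self_of_nhds
    have dd7 : DifferentiableAt ℝ (pdu (pdu Wq)) 0 := hDTWuu.diff.self_of_nhds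
    have dd8 : DifferentiableAt ℝ (pdu (pdu Y)) 0 := hDTYuu.diff.self_of_nhds
    rw [pdu_add_pt (((((((((dd0.fun_mul dd1).fun_mul dd2).fun_add ((dd3.fun_mul dd4).fun_mul dd2)).fun_add ((dd3.fun_mul dd1).fun_mul dd5)).fun_add ((dd3.fun_mul dd4).fun_mul dd2)).fun_add ((dd6.fun_mul dd7).fun_mul dd2)).fun_add ((dd6.fun_mul dd4).fun_mul dd5)).fun_add ((dd3.fun_mul dd1).fun_mul dd5)).fun_add ((dd6.fun_mul dd4).fun_mul dd5)) ((dd6.fun_mul dd1).fun_mul dd8), pdu_add_pt ((((((((dd0.fun_mul dd1).fun_mul dd2).fun_add ((dd3.fun_mul dd4).fun_mul dd2)).fun_add ((dd3.fun_mul dd1).fun_mul dd5)).fun_add ((dd3.fun_mul dd4).fun_mul dd2)).fun_add ((dd6.fun_mul dd7).fun_mul dd2)).fun_add ((dd6.fun_mul dd4).fun_mul dd5)).fun_add ((dd3.fun_mul dd1).fun_mul dd5)) ((dd6.fun_mul dd4).fun_mul dd5), pdu_add_pt (((((((dd0.fun_mul dd1).fun_mul dd2).fun_add ((dd3.fun_mul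 dd4).fun_mul dd2)).fun_add ((dd3.fun_mul dd1).fun_mul dd5)).fun_add ((dd3.fun_mul dd4).fun_mul dd2)).fun_add ((dd6.fun_mul dd7).fun_mul dd2)).fun_add ((dd6.fun_mul dd4).fun_mul dd5)) ((dd3.fun_mul dd1).fun_mul dd5), pdu_add_pt ((((((dd0.fun_mul dd1).fun_mul dd2).fun_add ((dd3.fun_mul dd4).fun_mul dd2)).fun_add ((dd3.fun_mul dd1).fun_mul dd5)).fun_add ((dd3.fun_mul dd4).fun_mul dd2)).fun_add ((dd6.fun_mul dd7).fun_mul dd2)) ((dd6.fun_mul dd4).fun_mul dd5), pdu_add_pt (((((dd0.fun_mul dd1).fun_mul dd2).fun_add ((dd3.fun_mul dd4).fun_mul dd2)).fun_add ((dd3.fun_mul dd1).fun_mul dd5)).fun_add ((dd3.fun_mul dd4).fun_mul dd2)) ((dd6.fun_mul dd7).fun_mul dd2), pdu_add_pt ((((dd0.fun_mul dd1).fun_mul dd2).fun_add ((dd3.fun_mul dd4).fun_mul dd2)).fun_add ((dd3.fun_mul dd1).fun_mul dd5)) ((dd3.fun_mul dd4).fun_mul dd2), pdu_add_pt (((dd0.fun_mul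 dd1).fun_mul dd2).fun_add ((dd3.fun_mul dd4).fun_mul dd2)) ((dd3.fun_mul dd1).fun_mul dd5), pdu_add_pt ((dd0.fun_mul dd1).fun_mul dd2) ((dd3.fun_mul dd4).fun_mul dd2), pdu_mul3_pt dd0 dd1 dd2, pdu_mul3_pt dd3 dd4 dd2, pdu_mul3_pt dd3 dd1 dd5, pdu_mul3_pt dd6 dd7 dd2, pdu_mul3_pt dd6 dd4 dd5, pdu_mul3_pt dd6 dd1 dd8]
    try simp only [sfv, sfuv, sfvv, sfuuv, sfuvv]
    try simp only [h10, h01, h20, h11, h02, h30, h21, h12, h03, h40, h31, h22, h50, hκ0, vw10, vw20, vW0, vWu0, vWv0, vWuu0, vWuv0, vWuuu0, vA0, vAu0, vAv0, vw1u0, vw1v0, vw1uu0, vAuu0, vY0, vYu0, vYv0, vYuu0, vYuv0, vYuuu0, vX0, vXu0, vXv0, vXuu0, vκu0, vκv0, vκuu0, vκuv0, vκvu0]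
    try ring
  have E1u3 : pdu (fun p => pdu (pdu (pdu (pdu f))) p * w1 p + pdu (pdu (pdu f)) p * pdu w1 p + pdu (pdu (pdu f)) p * pdu w1 p + pdu (pdu f) p * pdu (pdu w1) p + pdv (pdu (pdu (pdu f))) p * w2 p + pdv (pdu (pdu f)) p * pdu w2 p + pdv (pdu (pdu f)) p * pdu w2 p + pdv (pdu f) p * pdu (pdu w2) p) 0 = pdu (fun p => pdu (pdu κ) p * Wq p * Y p + pdu κ p * pdu Wq p * Y p + pdu κ p * Wq p * pdu Y p + pdu κ p * pdu Wq p * Y p + κ p * pdu (pdu Wq) p * Y p + κ p * pdu Wq p * pdu Y p + pdu κ p * Wq p * pdu Y p + κ p * pdu Wq p * pdu Y p + κ p * Wq p * pdu (pdu Y) p) 0 := (pdu_congr C1uu).eq_of_nhds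
  rw [ptL1u3, ptR1u3] at E1u3
  have vκuuu0 : pdu (pdu (pdu κ)) 0 = 3 * (pdu (pdu w2) 0) * a21 + 3 * (pdu w2 0) * a31 + (-18) * a30 * k1 * k1 + a50 := by
    linear_combination -E1u3
  have vD1f0 : D1f 0 = a30 := by
    rw [hD1fd]
    show w1 0 * pdu κ 0 + w2 0 * pdv κ 0 = a30
    try simp only [h10, h01, h20, h11, h02, h30, h21, h12, h03, h40, h31, h22, h50, hκ0, vw10, vw20, vW0, vWu0, vWv0, vWuu0, vWuv0, vWuuu0, vA0, vAu0, vAv0, vw1u0, vw1v0, vw1uu0, vAuu0, vY0, vYu0, vYv0, vYuu0, vYuv0, vYuuu0, vX0, vXu0, vXv0, vXuu0, vκu0, vκv0, vκuu0, vκuv0, vκvu0, vκuuu0]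
    try ring
  have eD1u : pdu D1f =ᶠ[nhds (0:ℝ×ℝ)] (fun p => pdu w1 p * pdu κ p + w1 p * pdu (pdu κ) p + pdu w2 p * pdv κ p + w2 p * pdu (pdv κ) p) := by
    rw [hD1fd]
    filter_upwards [hDTw1.diff, hDTku.diff, hDTw2.diff, hDTkv.diff] with p dd0 dd1 dd2 dd3
    rw [pdu_add_pt (dd0.fun_mul dd1) (dd2.fun_mul dd3), pdu_mul_pt dd0 dd1, pdu_mul_pt dd2 dd3]
    try simp only [sfv, sfuv, sfvv, sfuuv, sfuvv]
    try ring
  have ED1u : pdu D1f 0 = pdu w1 0 * pdu κ 0 + w1 0 * pdu (pdu κ) 0 + pdu w2 0 * pdv κ 0 + w2 0 * pdu (pdv κ) 0 := eD1u.eq_of_nhds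
  have vpD1u0 : pdu D1f 0 = 3 * (pdu w2 0) * a21 + a40 + (-3) * k1 * k1 * k1 := by
    simp only [h10, h01, h20, h11, h02, h30, h21, h12, h03, h40, h31, h22, h50, hκ0, vw10, vw20, vW0, vWu0, vWv0, vWuu0, vWuv0, vWuuu0, vA0, vAu0, vAv0, vw1u0, vw1v0, vw1uu0, vAuu0, vY0, vYu0, vYv0, vYuu0, vYuv0, vYuuu0, vX0, vXu0, vXv0, vXuu0, vκu0, vκv0, vκuu0, vκuv0, vκvu0, vκuuu0, vD1f0] at ED1u
    linear_combination ED1u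
  have vpD1v0 : pdv D1f 0 = (pdu w2 0) * a12 + 2 * (pdv w2 0) * a21 + a31 := by
    rw [hD1fd]
    have dd0 : DifferentiableAt ℝ (w1) 0 := hDTw1.diff.self_of_nhds
    have dd1 : DifferentiableAt ℝ (pdu κ) 0 := hDTku.diff.self_of_nhds
    have dd2 : DifferentiableAt ℝ (w2) 0 := hDTw2.diff.self_of_nhds
    have dd3 : DifferentiableAt ℝ (pdv κ) 0 := hDTkv.diff.self_of_nhds
    rw [pdv_add_pt (dd0.fun_mul dd1) (dd2.fun_mul dd3), pdv_mul_pt dd0 dd1, pdv_mul_pt dd2 dd3]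
    try simp only [sfv, sfuv, sfvv, sfuuv, sfuvv]
    try simp only [h10, h01, h20, h11, h02, h30, h21, h12, h03, h40, h31, h22, h50, hκ0, vw10, vw20, vW0, vWu0, vWv0, vWuu0, vWuv0, vWuuu0, vA0, vAu0, vAv0, vw1u0, vw1v0, vw1uu0, vAuu0, vY0, vYu0, vYv0, vYuu0, vYuv0, vYuuu0, vX0, vXu0, vXv0, vXuu0, vκu0, vκv0, vκuu0, vκuv0, vκvu0, vκuuu0, vD1f0, vpD1u0]
    try ring
  have ptD1uu : pdu (fun p => pdu w1 p * pdu κ p + w1 p * pdu (pdu κ) p + pdu w2 p * pdv κ p + w2 p * pdu (pdv κ) p) 0 = 4 * (pdu (pdu w2) 0) * a21 + 2 * (pdu w2 0) * (pdu w2 0) * a12 + (-1) * (pdu w2 0) * (pdu w2 0) * a30 + 2 * (pdu w2 0) * (pdv w2 0) * a21 + 5 * (pdu w2 0) * a31 + (-19) * a30 * k1 * k1 + a50 := by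
    have dd0 : DifferentiableAt ℝ (pdu w1) 0 := hDTw1u.diff.self_of_nhds
    have dd1 : DifferentiableAt ℝ (pdu κ) 0 := hDTku.diff.self_of_nhds
    have dd2 : DifferentiableAt ℝ (w1) 0 := hDTw1.diff.self_of_nhds
    have dd3 : DifferentiableAt ℝ (pdu (pdu κ)) 0 := hDTkuu.diff.self_of_nhds
    have dd4 : DifferentiableAt ℝ (pdu w2) 0 := hDTw2u.diff.self_of_nhds
    have dd5 : DifferentiableAt ℝ (pdv κ) 0 := hDTkv.diff.self_of_nhds
    have dd6 : DifferentiableAt ℝ (w2) 0 := hDTw2.diff.self_of_nhds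
    have dd7 : DifferentiableAt ℝ (pdu (pdv κ)) 0 := hDTkvu.diff.self_of_nhds
    rw [pdu_add_pt (((dd0.fun_mul dd1).fun_add (dd2.fun_mul dd3)).fun_add (dd4.fun_mul dd5)) (dd6.fun_mul dd7), pdu_add_pt ((dd0.fun_mul dd1).fun_add (dd2.fun_mul dd3)) (dd4.fun_mul dd5), pdu_add_pt (dd0.fun_mul dd1) (dd2.fun_mul dd3), pdu_mul_pt dd0 dd1, pdu_mul_pt dd2 dd3, pdu_mul_pt dd4 dd5, pdu_mul_pt dd6 dd7]
    try simp only [sfv, sfuv, sfvv, sfuuv, sfuvv]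
    try simp only [h10, h01, h20, h11, h02, h30, h21, h12, h03, h40, h31, h22, h50, hκ0, vw10, vw20, vW0, vWu0, vWv0, vWuu0, vWuv0, vWuuu0, vA0, vAu0, vAv0, vw1u0, vw1v0, vw1uu0, vAuu0, vY0, vYu0, vYv0, vYuu0, vYuv0, vYuuu0, vX0, vXu0, vXv0, vXuu0, vκu0, vκv0, vκuu0, vκuv0, vκvu0, vκuuu0, vD1f0, vpD1u0, vpD1v0]
    try ring
  have ED1uu : pdu (pdu D1f) 0 = pdu (fun p => pdu w1 p * pdu κ p + w1 p * pdu (pdu κ) p + pdu w2 p * pdv κ p + w2 p * pdu (pdv κ) p) 0 := (pdu_congr eD1u).eq_of_nhds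
  rw [ptD1uu] at ED1uu
  have vpD1uu0 : pdu (pdu D1f) 0 = 4 * (pdu (pdu w2) 0) * a21 + 2 * (pdu w2 0) * (pdu w2 0) * a12 + (-1) * (pdu w2 0) * (pdu w2 0) * a30 + 2 * (pdu w2 0) * (pdv w2 0) * a21 + 5 * (pdu w2 0) * a31 + (-19) * a30 * k1 * k1 + a50 := by
    linear_combination ED1uu
  have vpD2u0 : pdu D2f 0 = 4 * (pdu (pdu w2) 0) * a21 + 3 * (pdu w2 0) * (pdu w2 0) * a12 + (-1) * (pdu w2 0) * (pdu w2 0) * a30 + 4 * (pdu w2 0) * (pdv w2 0) * a21 + 6 * (pdu w2 0) * a31 + (-19) * a30 * k1 * k1 + a50 := by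
    rw [hD2fd]
    have dd0 : DifferentiableAt ℝ (w1) 0 := hDTw1.diff.self_of_nhds
    have dd1 : DifferentiableAt ℝ (pdu D1f) 0 := hDTD1u.diff.self_of_nhds
    have dd2 : DifferentiableAt ℝ (w2) 0 := hDTw2.diff.self_of_nhds
    have dd3 : DifferentiableAt ℝ (pdv D1f) 0 := hDTD1v.diff.self_of_nhds
    rw [pdu_add_pt (dd0.fun_mul dd1) (dd2.fun_mul dd3), pdu_mul_pt dd0 dd1, pdu_mul_pt dd2 dd3]
    try simp only [sfv, sfuv, sfvv, sfuuv, sfuvv]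
    try simp only [h10, h01, h20, h11, h02, h30, h21, h12, h03, h40, h31, h22, h50, hκ0, vw10, vw20, vW0, vWu0, vWv0, vWuu0, vWuv0, vWuuu0, vA0, vAu0, vAv0, vw1u0, vw1v0, vw1uu0, vAuu0, vY0, vYu0, vYv0, vYuu0, vYuv0, vYuuu0, vX0, vXu0, vXv0, vXuu0, vκu0, vκv0, vκuu0, vκuv0, vκvu0, vκuuu0, vD1f0, vpD1u0, vpD1v0, vpD1uu0]
    try ring

  have gk1 : dirDeriv w κ = D1f := by
    funext p
    rw [hD1fd]
    show fderiv ℝ κ p (w p) = w1 p * pdu κ p + w2 p * pdv κ p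
    simp only [hw1d, hw2d]
    exact fderiv_apply_decomp _ _
  have gk2 : dirDeriv w D1f = D2f := by
    funext p
    rw [hD2fd]
    show fderiv ℝ D1f p (w p) = w1 p * pdu D1f p + w2 p * pdv D1f p
    simp only [hw1d, hw2d]
    exact fderiv_apply_decomp _ _
  have vdir1 : dirDeriv w κ 0 = a30 := by rw [gk1, vD1f0]
  have vdir2 : dirDeriv w (dirDeriv w κ) 0 = pdu D1f 0 := by
    rw [gk1]
    show fderiv ℝ D1f 0 (w 0) = pdu D1f 0
    rw [hw0]
    rfl
  have vdir3 : dirDeriv w (dirDeriv w (dirDeriv w κ)) 0 = pdu D2f 0 := by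
    rw [gk1, gk2]
    show fderiv ℝ D2f 0 (w 0) = pdu D2f 0
    rw [hw0]
    rfl
  rw [vdir1, vdir2, vdir3, vpD1u0, vpD2u0]
  have hs1 : pdu w2 0 = a21 / (k1 - k2) := by
    rw [eq_div_iff hd]
    linear_combination vw2u0
  have hs2 : pdv w2 0 = a12 / (k1 - k2) := by
    rw [eq_div_iff hd]
    linear_combination vw2v0
  have hs3 : pdu (pdu w2) 0
      = (a31 * (k1 - k2) + 2 * a12 * a21 - 2 * a30 * a21) / ((k1 - k2) * (k1 - k2)) := by
    rw [eq_div_iff (mul_ne_zero hd hd)]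
    linear_combination (k1 - k2) * vw2uu0 + (2 * a12 - 2 * a30) * vw2u0
  have key2 : (3 * (pdu w2 0) * a21 + a40 + (-3) * k1 * k1 * k1) * (k1 - k2) = 3 * a21 ^ 2 + (a40 - 3 * k1 ^ 3) * (k1 - k2) := by
    rw [hs1]
    field_simp
    ring
  have key3 : (4 * (pdu (pdu w2) 0) * a21 + 3 * (pdu w2 0) * (pdu w2 0) * a12 + (-1) * (pdu w2 0) * (pdu w2 0) * a30 + 4 * (pdu w2 0) * (pdv w2 0) * a21 + 6 * (pdu w2 0) * a31 + (-19) * a30 * k1 * k1 + a50) * ((k1 - k2) * (k1 - k2))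
      = 15 * a21 ^ 2 * a12 + 10 * a21 * a31 * (k1 - k2) + a50 * (k1 - k2) ^ 2
        + a30 * ((-9) * a21 * a21 + (-19) * (k1 - k2) * (k1 - k2) * k1 * k1) := by
    rw [hs3, hs1, hs2]
    field_simp
    ring
  constructor
  · rintro ⟨g1, g2, g3⟩
    refine ⟨g1, ?_, ?_⟩
    · linear_combination (k1 - k2) * g2 - key2
    · intro hc
      have h0 : (4 * (pdu (pdu w2) 0) * a21 + 3 * (pdu w2 0) * (pdu w2 0) * a12 + (-1) * (pdu w2 0) * (pdu w2 0) * a30 + 4 * (pdu w2 0) * (pdv w2 0) * a21 + 6 * (pdu w2 0) * a31 + (-19) * a30 * k1 * k1 + a50) * ((k1 - k2) * (k1 - k2)) = 0 := by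
        rw [key3, g1, hc]; ring
      exact g3 ((mul_eq_zero.mp h0).resolve_right (mul_ne_zero hd hd))
  · rintro ⟨g1, g2, g3⟩
    refine ⟨g1, ?_, ?_⟩
    · have h1 : (3 * (pdu w2 0) * a21 + a40 + (-3) * k1 * k1 * k1) * (k1 - k2) = 0 := by rw [key2]; exact g2
      exact (mul_eq_zero.mp h1).resolve_right hd
    · intro hc
      apply g3
      linear_combination ((k1 - k2) * (k1 - k2)) * hc - key3 - ((-9) * a21 * a21 + (-19) * (k1 - k2) * (k1 - k2) * k1 * k1) * g1
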